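/- arXiv:1003.2362 — 2 statements merged into one kernel-verified Lean document; each statement's English description precedes it below -/
import Mathlib

section
/- Fix reals i, j > 0 with i + j = 1. If x = (x₁, x₂) ∈ ℝ² is not (i,j)-badly approximable (i.e., for every c > 0 there exists q ∈ ℕ with max{‖q x₁‖^{1/i}, ‖q x₂‖^{1/j}} < c/q), then there exists a strictly positive non-increasing function ψ₀ : ℕ → ℝ with ∑_{r=1}^∞ ψ₀(r) = ∞ such that the set of γ = (γ₁, γ₂) ∈ [0,1]² satisfying max{‖q x₁ − γ₁‖^{1/i}, ‖q x₂ − γ₂‖^{1/j}} ≤ ψ₀(|q|) for infinitely many nonzero integers q has 2-dimensional Lebesgue measure zero. -/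
open MeasureTheory Set Filter

/-- Distance to the nearest integer. -/
noncomputable def nint (y : ℝ) : ℝ := |y - (round y : ℝ)|

/-- `pw y e = y ^ (1/e)`, with the convention that `y ^ (1/0) = 0`. -/
noncomputable def pw (y e : ℝ) : ℝ := if e = 0 then 0 else y ^ (1 / e)

/-- A vector is irrational if `1, x₁, x₂` are linearly independent over `ℚ`. -/
def IrrVec (x : ℝ × ℝ) : Prop :=
  ∀ a b c : ℤ, (a : ℝ) * x.1 + (b : ℝ) * x.2 + (c : ℝ) = 0 → a = 0 ∧ b = 0 ∧ c = 0

/-- The set `Bad(i,j)` of `(i,j)`-badly approximable vectors. -/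
def Badij (i j : ℝ) (x : ℝ × ℝ) : Prop :=
  IrrVec x ∧ ∃ c > (0 : ℝ), ∀ q : ℕ, 0 < q →
    max (pw (nint (q * x.1)) i) (pw (nint (q * x.2)) j) > c / q

/-- The twisted well-approximable set `W^x_{(i,j)}(ψ)`. -/
def twistedW (x : ℝ × ℝ) (i j : ℝ) (ψ : ℕ → ℝ) : Set (ℝ × ℝ) :=
  {γ ∈ Set.Icc (0 : ℝ × ℝ) 1 |
    {q : ℤ | q ≠ 0 ∧
      max (pw (nint (q * x.1 - γ.1)) i) (pw (nint (q * x.2 - γ.2)) j)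
        ≤ ψ q.natAbs}.Infinite}

lemma nint_nonneg (y : ℝ) : 0 ≤ nint y := abs_nonneg _





lemma nint_le (y : ℝ) (n : ℤ) : nint y ≤ |y - n| := round_le y n

lemma nint_add_int (y : ℝ) (n : ℤ) : nint (y + n) = nint y := by
  unfold nint; rw [round_add_intCast]; push_cast; ring_nf

lemma nint_add_le (y v : ℝ) : nint (y + v) ≤ nint y + |v| := by
  calc nint (y + v) ≤ |y + v - round y| := nint_le _ _
    _ ≤ |y - round y| + |v| := by
        rw [show y + v - (round y:ℝ) = (y - round y) + v by ring]
        exact abs_add_le _ _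
    _ = nint y + |v| := rfl

lemma nint_eq_zero_iff {y : ℝ} : nint y = 0 ↔ y = round y := by
  unfold nint; rw [abs_eq_zero, sub_eq_zero]

lemma pw_eq (y : ℝ) {e : ℝ} (he : e ≠ 0) : pw y e = y ^ (1/e) := if_neg he

lemma pw_zero {e : ℝ} (he : 0 < e) : pw 0 e = 0 := by
  rw [pw_eq _ (ne_of_gt he), Real.zero_rpow (by positivity)]

lemma pw_nonneg {y e : ℝ} (hy : 0 ≤ y) : 0 ≤ pw y e := by
  unfold pw; split
  · exact le_refl 0
  · exact Real.rpow_nonneg hy _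

/-- From `pw y e ≤ t` with `y ≥ 0`, `e > 0`, deduce `y ≤ t ^ e`. -/
lemma le_rpow_of_pw_le {y e t : ℝ} (hy : 0 ≤ y) (he : 0 < e) (ht : pw y e ≤ t) :
    y ≤ t ^ e := by
  rw [pw_eq _ (ne_of_gt he)] at ht
  have h1 : (y ^ (1/e)) ^ e ≤ t ^ e :=
    Real.rpow_le_rpow (Real.rpow_nonneg hy _) ht (le_of_lt he)
  rwa [← Real.rpow_mul hy, one_div, inv_mul_cancel₀ (ne_of_gt he), Real.rpow_one] at h1

/-- `pw y e = 0` with `y ≥ 0`, `e > 0` implies `y = 0`. -/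
lemma eq_zero_of_pw_le_zero {y e : ℝ} (hy : 0 ≤ y) (he : 0 < e) (h : pw y e ≤ 0) : y = 0 := by
  have h0 : pw y e = 0 := le_antisymm h (pw_nonneg hy)
  rw [pw_eq _ (ne_of_gt he)] at h0
  rcases (Real.rpow_eq_zero_iff_of_nonneg hy).1 h0 with ⟨h1, _⟩
  exact h1


lemma nint_def (y : ℝ) : nint y = |y - (round y : ℝ)| := rfl

/-- 1-D cover: union of three intervals of radius `a` around `c mod 1`. -/
noncomputable def Ucov (c a : ℝ) : Set ℝ :=
  ⋃ n ∈ (Finset.Icc (-1 : ℤ) 1), Icc (c - ⌊c⌋ - n - a) (c - ⌊c⌋ - n + a)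

lemma Ucov_meas (c a : ℝ) : MeasurableSet (Ucov c a) := by
  apply Finset.measurableSet_biUnion
  intro n _; exact measurableSet_Icc

lemma Ucov_vol (c a : ℝ) : volume (Ucov c a) ≤ ENNReal.ofReal (6 * a) := by
  calc volume (Ucov c a) ≤ ∑ n ∈ Finset.Icc (-1:ℤ) 1,
        volume (Icc (c - ⌊c⌋ - n - a) (c - ⌊c⌋ - n + a)) := measure_biUnion_finset_le _ _
    _ = ∑ n ∈ Finset.Icc (-1:ℤ) 1, ENNReal.ofReal (2 * a) := by
        apply Finset.sum_congr rfl; intro n _; rw [Real.volume_Icc]; ring_nf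
    _ ≤ ENNReal.ofReal (6 * a) := by
        rw [Finset.sum_const]
        have : (Finset.Icc (-1:ℤ) 1).card = 3 := by decide
        rw [this, nsmul_eq_mul, (by simp : ((3:ℕ):ENNReal) = ENNReal.ofReal 3),
          ← ENNReal.ofReal_mul (by norm_num)]
        exact ENNReal.ofReal_le_ofReal (by linarith [le_refl a])

lemma mem_Ucov {c a y : ℝ} (hy0 : 0 ≤ y) (hy1 : y ≤ 1) (h : nint (c - y) ≤ a) :
    y ∈ Ucov c a := by
  set m : ℤ := round (c - ⌊c⌋ - y) with hm
  have hmem : m ∈ Finset.Icc (-1:ℤ) 1 := by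
    rw [Finset.mem_Icc]
    have h1 : c - ⌊c⌋ - y ≥ -1 := by
      have := Int.fract_nonneg c
      rw [Int.fract] at this; linarith
    have h2 : c - ⌊c⌋ - y < 1 := by
      have := Int.fract_lt_one c
      rw [Int.fract] at this; linarith
    constructor
    · have : (m:ℝ) ≥ c - ⌊c⌋ - y - 1/2 := by
        have := abs_sub_round (c - ⌊c⌋ - y); rw [← hm] at this
        have := abs_le.1 this; linarith [this.2]
      have : (m:ℝ) ≥ -3/2 := by linarith
      exact_mod_cast Int.le_of_sub_one_lt (by exact_mod_cast (by push_cast; linarith : (-1:ℝ) - 1 < m))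
    · have h3 : (m:ℝ) ≤ c - ⌊c⌋ - y + 1/2 := by
        have := abs_sub_round (c - ⌊c⌋ - y); rw [← hm] at this
        have := abs_le.1 this; linarith [this.1]
      have : (m:ℝ) < 2 := by linarith
      exact_mod_cast Int.lt_add_one_iff.1 (by exact_mod_cast (by push_cast; linarith : (m:ℝ) < 1 + 1))
  have key : |c - ⌊c⌋ - m - y| ≤ a := by
    have : m = round (c - y) - ⌊c⌋ := by
      rw [hm, show c - ⌊c⌋ - y = (c - y) - (⌊c⌋:ℤ) by push_cast; ring, round_sub_intCast]
    rw [this]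
    push_cast
    have : c - ⌊c⌋ - ((round (c-y):ℝ) - ⌊c⌋) - y = (c - y) - round (c - y) := by ring
    rw [this]
    exact h
  apply Set.mem_biUnion hmem
  rw [Set.mem_Icc]
  have := abs_le.1 key
  constructor <;> linarith [this.1, this.2]

lemma pw_pos {y e : ℝ} (hy : 0 < y) (he : 0 < e) : 0 < pw y e := by
  rw [pw_eq _ (ne_of_gt he)]; exact Real.rpow_pos_of_pos hy _
lemma nint_intCast (n : ℤ) : nint (n : ℝ) = 0 := by
  unfold nint; rw [round_intCast]; simp

lemma exists_large_q (i j : ℝ) (hi : 0 < i) (hj : 0 < j) (x : ℝ × ℝ)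
    (hnotbad : ∀ c > (0 : ℝ), ∃ q : ℕ, 0 < q ∧
      max (pw (nint (q * x.1)) i) (pw (nint (q * x.2)) j) < c / q) :
    ∀ c > (0:ℝ), ∀ R : ℕ, ∃ q : ℕ, R < q ∧
      max (pw (nint (q * x.1)) i) (pw (nint (q * x.2)) j) < c / q := by
  set v : ℕ → ℝ := fun q => max (pw (nint (q * x.1)) i) (pw (nint (q * x.2)) j) with hv
  intro c hc R
  by_cases hB : ∃ q₀ : ℕ, 0 < q₀ ∧ nint (q₀ * x.1) = 0 ∧ nint (q₀ * x.2) = 0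
  · obtain ⟨q₀, hq₀, h1, h2⟩ := hB
    refine ⟨q₀ * (R + 1), ?_, ?_⟩
    · calc R < R + 1 := Nat.lt_succ_self R
        _ ≤ q₀ * (R+1) := Nat.le_mul_of_pos_left _ hq₀
    · have e1 : nint ((↑(q₀ * (R+1)) : ℝ) * x.1) = 0 := by
        have : (↑(q₀ * (R+1)) : ℝ) * x.1 = ((R+1 : ℤ) * round ((q₀:ℝ) * x.1) : ℤ) := by
          have : (q₀:ℝ) * x.1 = round ((q₀:ℝ) * x.1) := by
            have := abs_eq_zero.1 h1; linarith [sub_eq_zero.1 this]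
          push_cast
          rw [show (↑q₀ * (↑R+1) : ℝ) * x.1 = (↑R+1) * ((q₀:ℝ) * x.1) by ring, ← this]
        rw [this, nint_intCast]
      have e2 : nint ((↑(q₀ * (R+1)) : ℝ) * x.2) = 0 := by
        have : (↑(q₀ * (R+1)) : ℝ) * x.2 = ((R+1 : ℤ) * round ((q₀:ℝ) * x.2) : ℤ) := by
          have : (q₀:ℝ) * x.2 = round ((q₀:ℝ) * x.2) := by
            have := abs_eq_zero.1 h2; linarith [sub_eq_zero.1 this]
          push_cast
          rw [show (↑q₀ * (↑R+1) : ℝ) * x.2 = (↑R+1) * ((q₀:ℝ) * x.2) by ring, ← this]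
        rw [this, nint_intCast]
      rw [e1, e2, pw_zero hi, pw_zero hj]
      simp only [max_self]
      positivity
  · push_neg at hB
    have hvpos : ∀ q : ℕ, 0 < q → 0 < v q := by
      intro q hq
      rcases eq_or_lt_of_le (nint_nonneg ((q:ℝ) * x.1)) with h1 | h1
      · rcases eq_or_lt_of_le (nint_nonneg ((q:ℝ) * x.2)) with h2 | h2
        · exact absurd h2.symm (hB q hq h1.symm)
        · exact lt_max_of_lt_right (pw_pos h2 hj)
      · exact lt_max_of_lt_left (pw_pos h1 hi)
    rcases Nat.eq_zero_or_pos R with rfl | hR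
    · obtain ⟨q, hq, hlt⟩ := hnotbad c hc; exact ⟨q, hq, hlt⟩
    · have hne : (Finset.Icc 1 R).Nonempty := ⟨1, Finset.mem_Icc.2 ⟨le_refl 1, hR⟩⟩
      set c' := min c ((Finset.Icc 1 R).inf' hne (fun q₀ => v q₀ * q₀ / 2)) with hc'
      have hc'pos : 0 < c' := by
        apply lt_min hc
        rw [Finset.lt_inf'_iff]
        intro q₀ hq₀
        have : 0 < q₀ := (Finset.mem_Icc.1 hq₀).1
        have := hvpos q₀ this
        positivity
      obtain ⟨q, hq, hlt⟩ := hnotbad c' hc'pos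
      have hq0 : (0:ℝ) < q := by exact_mod_cast hq
      have hqR : R < q := by
        by_contra hle
        push_neg at hle
        have hmem : q ∈ Finset.Icc 1 R := Finset.mem_Icc.2 ⟨hq, hle⟩
        have h1 : c' ≤ v q * q / 2 := le_trans (min_le_right _ _) (Finset.inf'_le _ hmem)
        have h2 : c' / q ≤ (v q * q / 2) / q := by gcongr
        have h3 : (v q * q / 2) / q = v q / 2 := by field_simp
        rw [h3] at h2
        have := hvpos q hq
        have := lt_of_lt_of_le hlt h2
        linarith
      refine ⟨q, hqR, lt_of_lt_of_le hlt ?_⟩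
      gcongr
      exact min_le_left _ _


lemma pow_aux (k c : ℝ) (hk : 1 ≤ k) (hc : 0 ≤ c) :
    (c * k^4) * (k^6)⁻¹ ≤ c * (k^2)⁻¹ := by
  have hk0 : (0:ℝ) < k := lt_of_lt_of_le one_pos hk
  rw [mul_inv_le_iff₀ (by positivity)]
  have h1 : c * (k^2)⁻¹ * k^6 = c * (k^4 * (k^2 * (k^2)⁻¹)) := by ring
  rw [h1, mul_inv_cancel₀ (by positivity), mul_one]

lemma pow_aux2 (k c : ℝ) (hk : 1 ≤ k) (hc : 0 ≤ c) :
    (c * k^2) * (k^6)⁻¹ ≤ c * (k^2)⁻¹ := by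
  have hk0 : (0:ℝ) < k := lt_of_lt_of_le one_pos hk
  rw [mul_inv_le_iff₀ (by positivity)]
  have h1 : c * (k^2)⁻¹ * k^6 = c * k^4 * (k^2*(k^2)⁻¹) := by ring
  rw [h1, mul_inv_cancel₀ (by positivity), mul_one]
  have h2 : k^2 ≤ k^4 := pow_le_pow_right₀ hk (by norm_num)
  nlinarith

lemma core_bound' (i j t e k q : ℝ) (hi : 0 < i) (hj : 0 < j) (hij : i + j = 1)
    (hk : 1 ≤ k) (hq : 1 ≤ q) (ht0 : 0 < t) (he0 : 0 < e)
    (htq : t ≤ q⁻¹) (hqt : q * t = (k^2)⁻¹)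
    (hei : e ^ i ≤ (k^6)⁻¹) (hej : e ^ j ≤ (k^6)⁻¹) (he6 : e ≤ (k^6)⁻¹) :
    q * ((t^i + (k^2+1) * ((e/q)^i)) * (t^j + (k^2+1) * ((e/q)^j))) ≤ 9 / k^2 := by
  have hk0 : (0:ℝ) < k := lt_of_lt_of_le one_pos hk
  have hq0 : (0:ℝ) < q := lt_of_lt_of_le one_pos hq
  have heq0 : 0 < e / q := by positivity
  have hk21 : k^2 + 1 ≤ 2 * k^2 := by nlinarith
  have hk44 : (k^2+1)^2 ≤ 4 * k^4 := by nlinarith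
  have htij : t ^ i * t ^ j = t := by rw [← Real.rpow_add ht0, hij, Real.rpow_one]
  have heqij : (e/q) ^ i * (e/q) ^ j = e/q := by
    rw [← Real.rpow_add heq0, hij, Real.rpow_one]
  have hqij : (q⁻¹) ^ i * (q⁻¹) ^ j = q⁻¹ := by
    rw [← Real.rpow_add (by positivity), hij, Real.rpow_one]
  have hsplit : ∀ z : ℝ, (e/q) ^ z = e ^ z * (q⁻¹) ^ z := by
    intro z
    rw [div_eq_mul_inv, Real.mul_rpow (le_of_lt he0) (by positivity)]
  have htqi : t ^ i ≤ (q⁻¹) ^ i := Real.rpow_le_rpow (le_of_lt ht0) htq (le_of_lt hi)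
  have htqj : t ^ j ≤ (q⁻¹) ^ j := Real.rpow_le_rpow (le_of_lt ht0) htq (le_of_lt hj)
  have hepos : ∀ z : ℝ, 0 ≤ e ^ z := fun z => Real.rpow_nonneg (le_of_lt he0) z
  have hqpos : ∀ z : ℝ, 0 ≤ (q⁻¹) ^ z := fun z => Real.rpow_nonneg (by positivity) z
  -- term 1
  have hT1 : q * (t^i * t^j) = (k^2)⁻¹ := by rw [htij, hqt]
  -- term 2
  have hT2 : q * ((k^2+1) * (t^i * (e/q)^j)) ≤ 2 * (k^2)⁻¹ := by
    have ha : t^i * (e/q)^j ≤ e^j * q⁻¹ := by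
      rw [hsplit j]
      calc t^i * (e^j * (q⁻¹)^j) ≤ (q⁻¹)^i * (e^j * (q⁻¹)^j) := by
            apply mul_le_mul_of_nonneg_right htqi
            exact mul_nonneg (hepos j) (hqpos j)
        _ = e^j * ((q⁻¹)^i * (q⁻¹)^j) := by ring
        _ = e^j * q⁻¹ := by rw [hqij]
    calc q * ((k^2+1) * (t^i * (e/q)^j)) ≤ q * ((k^2+1) * (e^j * q⁻¹)) := by
          apply mul_le_mul_of_nonneg_left _ (le_of_lt hq0)
          exact mul_le_mul_of_nonneg_left ha (by positivity)
      _ = (k^2+1) * e^j := by field_simp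
      _ ≤ (2*k^2) * (k^6)⁻¹ := mul_le_mul hk21 hej (hepos j) (by positivity)
      _ = (2 * k^2) * (k^6)⁻¹ := by ring
      _ ≤ 2 * (k^2)⁻¹ := pow_aux2 k 2 hk (by norm_num)
  -- term 3
  have hT3 : q * ((k^2+1) * ((e/q)^i * t^j)) ≤ 2 * (k^2)⁻¹ := by
    have ha : (e/q)^i * t^j ≤ e^i * q⁻¹ := by
      rw [hsplit i]
      calc (e^i * (q⁻¹)^i) * t^j ≤ (e^i * (q⁻¹)^i) * (q⁻¹)^j := by
            apply mul_le_mul_of_nonneg_left htqj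
            exact mul_nonneg (hepos i) (hqpos i)
        _ = e^i * ((q⁻¹)^i * (q⁻¹)^j) := by ring
        _ = e^i * q⁻¹ := by rw [hqij]
    calc q * ((k^2+1) * ((e/q)^i * t^j)) ≤ q * ((k^2+1) * (e^i * q⁻¹)) := by
          apply mul_le_mul_of_nonneg_left _ (le_of_lt hq0)
          exact mul_le_mul_of_nonneg_left ha (by positivity)
      _ = (k^2+1) * e^i := by field_simp
      _ ≤ (2*k^2) * (k^6)⁻¹ := mul_le_mul hk21 hei (hepos i) (by positivity)
      _ ≤ 2 * (k^2)⁻¹ := pow_aux2 k 2 hk (by norm_num)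
  -- term 4
  have hT4 : q * ((k^2+1)^2 * ((e/q)^i * (e/q)^j)) ≤ 4 * (k^2)⁻¹ := by
    rw [heqij]
    have h0 : q * ((k^2+1)^2 * (e/q)) = (k^2+1)^2 * e := by field_simp
    rw [h0]
    calc (k^2+1)^2 * e ≤ (4*k^4) * (k^6)⁻¹ :=
          mul_le_mul hk44 he6 (le_of_lt he0) (by positivity)
      _ ≤ 4 * (k^2)⁻¹ := pow_aux k 4 hk (by norm_num)
  have expand : q * ((t^i + (k^2+1) * ((e/q)^i)) * (t^j + (k^2+1) * ((e/q)^j)))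
      = q * (t^i * t^j) + q * ((k^2+1) * (t^i * (e/q)^j))
        + q * ((k^2+1) * ((e/q)^i * t^j)) + q * ((k^2+1)^2 * ((e/q)^i * (e/q)^j)) := by
    ring
  have h9 : (9:ℝ)/k^2 = 9 * (k^2)⁻¹ := div_eq_mul_inv 9 _
  rw [expand, h9]
  linarith


noncomputable def epsq (i j : ℝ) (K : ℕ) : ℝ := ((K:ℝ)⁻¹) ^ (6 + 6/i + 6/j)

lemma epsq_pos (i j : ℝ) (K : ℕ) : 0 < epsq i j (K+1) :=
  Real.rpow_pos_of_pos (by positivity) _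

section Construction

variable (i j : ℝ) (x : ℝ × ℝ)
variable (H : ∀ c > (0:ℝ), ∀ R : ℕ, ∃ q : ℕ, R < q ∧
      max (pw (nint (q * x.1)) i) (pw (nint (q * x.2)) j) < c / q)

noncomputable def RQ : ℕ → ℕ × ℕ
  | 0 => (0, 1)
  | (K+1) =>
      let q := (H (epsq i j (K+1)) (epsq_pos i j K) (RQ K).1).choose
      ((K+1)^2 * q, q)

noncomputable def Rs (K : ℕ) : ℕ := (RQ i j x H K).1
noncomputable def qs (K : ℕ) : ℕ := (RQ i j x H K).2

lemma Rs_zero : Rs i j x H 0 = 0 := rfl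

lemma Rs_succ (K : ℕ) : Rs i j x H (K+1) = (K+1)^2 * qs i j x H (K+1) := by
  simp [Rs, qs, RQ]

lemma qs_spec (K : ℕ) : Rs i j x H K < qs i j x H (K+1) ∧
    max (pw (nint ((qs i j x H (K+1) : ℝ) * x.1)) i)
        (pw (nint ((qs i j x H (K+1) : ℝ) * x.2)) j)
      < epsq i j (K+1) / qs i j x H (K+1) := by
  have h := (H (epsq i j (K+1)) (epsq_pos i j K) (RQ i j x H K).1).choose_spec
  exact h

lemma qs_pos (K : ℕ) : 0 < qs i j x H (K+1) :=
  lt_of_le_of_lt (Nat.zero_le _) (qs_spec i j x H K).1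

lemma Rs_lt_succ (K : ℕ) : Rs i j x H K < Rs i j x H (K+1) := by
  rw [Rs_succ]
  calc Rs i j x H K < qs i j x H (K+1) := (qs_spec i j x H K).1
    _ ≤ (K+1)^2 * qs i j x H (K+1) := Nat.le_mul_of_pos_left _ (by positivity)

lemma Rs_strictMono : StrictMono (Rs i j x H) :=
  strictMono_nat_of_lt_succ (Rs_lt_succ i j x H)

lemma Rs_ge (K : ℕ) : K ≤ Rs i j x H K := (Rs_strictMono i j x H).le_apply

lemma Rs_pos (K : ℕ) : 0 < Rs i j x H (K+1) :=
  lt_of_le_of_lt (Nat.zero_le _) (Rs_lt_succ i j x H K)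

lemma Rs_two_mul (K : ℕ) : 2 * Rs i j x H K ≤ Rs i j x H (K+1) := by
  rcases Nat.eq_zero_or_pos K with rfl | hK
  · rw [Rs_zero]; simp
  · rw [Rs_succ]
    have h1 : Rs i j x H K < qs i j x H (K+1) := (qs_spec i j x H K).1
    have h2 : 4 ≤ (K+1)^2 := by nlinarith
    calc 2 * Rs i j x H K ≤ 4 * qs i j x H (K+1) := by omega
      _ ≤ (K+1)^2 * qs i j x H (K+1) := Nat.mul_le_mul_right _ h2

/-- block index of `r`: least `K` with `r ≤ Rs K`. -/
noncomputable def blk (r : ℕ) : ℕ :=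
  Nat.find (⟨r, Rs_ge i j x H r⟩ : ∃ K, r ≤ Rs i j x H K)

noncomputable def tK (K : ℕ) : ℝ := ((Rs i j x H K : ℕ) : ℝ)⁻¹

noncomputable def ψc (r : ℕ) : ℝ := tK i j x H (max (blk i j x H r) 1)

lemma blk_le_iff (r K : ℕ) : blk i j x H r ≤ K ↔ r ≤ Rs i j x H K := by
  constructor
  · intro h
    calc r ≤ Rs i j x H (blk i j x H r) :=
          Nat.find_spec (⟨r, Rs_ge i j x H r⟩ : ∃ K, r ≤ Rs i j x H K)
      _ ≤ Rs i j x H K := (Rs_strictMono i j x H).monotone h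
  · intro h
    exact Nat.find_le h

lemma blk_eq (r K : ℕ) (h1 : Rs i j x H K < r) (h2 : r ≤ Rs i j x H (K+1)) :
    blk i j x H r = K + 1 := by
  have hle : blk i j x H r ≤ K + 1 := (blk_le_iff i j x H r (K+1)).2 h2
  have hgt : ¬ blk i j x H r ≤ K := by
    intro hc
    exact absurd ((blk_le_iff i j x H r K).1 hc) (by omega)
  omega

lemma tK_pos (K : ℕ) : 0 < tK i j x H (K+1) := by
  unfold tK
  have := Rs_pos i j x H K
  positivity

lemma ψc_pos (r : ℕ) : 0 < ψc i j x H r := by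
  unfold ψc
  have h : max (blk i j x H r) 1 = (max (blk i j x H r) 1 - 1) + 1 := by omega
  rw [h]; exact tK_pos i j x H _

lemma ψc_anti : Antitone (ψc i j x H) := by
  intro r s hrs
  unfold ψc tK
  have hblk : blk i j x H r ≤ blk i j x H s := by
    apply Nat.find_mono
    intro K hK
    omega
  have h1 : max (blk i j x H r) 1 ≤ max (blk i j x H s) 1 := by omega
  have h2 : Rs i j x H (max (blk i j x H r) 1) ≤ Rs i j x H (max (blk i j x H s) 1) :=
    (Rs_strictMono i j x H).monotone h1
  have h3 : 0 < Rs i j x H (max (blk i j x H r) 1) := by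
    have : max (blk i j x H r) 1 = (max (blk i j x H r) 1 - 1) + 1 := by omega
    rw [this]; exact Rs_pos i j x H _
  apply inv_anti₀ (by exact_mod_cast h3) (by exact_mod_cast h2)



-- ### bounds on epsq powers

lemma epsq_rpow_le_i (i j : ℝ) (hi : 0 < i) (hj : 0 < j) (k : ℝ) (hk : 1 ≤ k) :
    ((k⁻¹) ^ (6+6/i+6/j) : ℝ) ^ i ≤ (k^6)⁻¹ := by
  have hk0 : (0:ℝ) < k := lt_of_lt_of_le one_pos hk
  have hki : (0:ℝ) < k⁻¹ := by positivity
  have hki1 : k⁻¹ ≤ 1 := by rw [inv_le_one_iff₀]; right; exact hk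
  have hk6 : (k⁻¹) ^ (6:ℝ) = (k^6)⁻¹ := by
    rw [show (6:ℝ) = ((6:ℕ):ℝ) by norm_num, Real.rpow_natCast, inv_pow]
  rw [← Real.rpow_mul (le_of_lt hki), ← hk6]
  apply Real.rpow_le_rpow_of_exponent_ge hki hki1
  have h1 : (6+6/i+6/j) * i = 6*i + 6 + (6*i)/j := by field_simp
  have h2 : 0 < 6*i := by positivity
  have h3 : 0 < (6*i)/j := by positivity
  nlinarith

lemma epsq_le (i j : ℝ) (hi : 0 < i) (hj : 0 < j) (k : ℝ) (hk : 1 ≤ k) :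
    ((k⁻¹) ^ (6+6/i+6/j) : ℝ) ≤ (k^6)⁻¹ := by
  have hk0 : (0:ℝ) < k := lt_of_lt_of_le one_pos hk
  have hki : (0:ℝ) < k⁻¹ := by positivity
  have hki1 : k⁻¹ ≤ 1 := by rw [inv_le_one_iff₀]; right; exact hk
  have hk6 : (k⁻¹) ^ (6:ℝ) = (k^6)⁻¹ := by
    rw [show (6:ℝ) = ((6:ℕ):ℝ) by norm_num, Real.rpow_natCast, inv_pow]
  rw [← hk6]
  apply Real.rpow_le_rpow_of_exponent_ge hki hki1
  have h1 : 0 < 6/i := by positivity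
  have h2 : 0 < 6/j := by positivity
  linarith

-- ### the covering sets and their volumes


noncomputable def aK (K : ℕ) : ℝ :=
  tK i j x H K ^ i + (((K:ℕ):ℝ)^2+1) * ((epsq i j K / qs i j x H K) ^ i)

noncomputable def bK (K : ℕ) : ℝ :=
  tK i j x H K ^ j + (((K:ℕ):ℝ)^2+1) * ((epsq i j K / qs i j x H K) ^ j)

noncomputable def Fcov (K : ℕ) : Set (ℝ × ℝ) :=
  ⋃ r ∈ Finset.range (qs i j x H K),
    (Ucov ((r:ℝ) * x.1) (aK i j x H K)) ×ˢ (Ucov ((r:ℝ) * x.2) (bK i j x H K))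

lemma aK_nonneg (K : ℕ) (hi : 0 < i) : 0 ≤ aK i j x H (K+1) := by
  unfold aK
  have h1 : (0:ℝ) ≤ tK i j x H (K+1) := le_of_lt (tK_pos i j x H K)
  have h2 : (0:ℝ) < epsq i j (K+1) := epsq_pos i j K
  have h3 : (0:ℝ) < (qs i j x H (K+1) : ℝ) := by exact_mod_cast qs_pos i j x H K
  have := Real.rpow_nonneg h1 i
  have := Real.rpow_nonneg (le_of_lt (div_pos h2 h3)) i
  positivity

lemma bK_nonneg (K : ℕ) (hj : 0 < j) : 0 ≤ bK i j x H (K+1) := by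
  unfold bK
  have h1 : (0:ℝ) ≤ tK i j x H (K+1) := le_of_lt (tK_pos i j x H K)
  have h2 : (0:ℝ) < epsq i j (K+1) := epsq_pos i j K
  have h3 : (0:ℝ) < (qs i j x H (K+1) : ℝ) := by exact_mod_cast qs_pos i j x H K
  have := Real.rpow_nonneg h1 j
  have := Real.rpow_nonneg (le_of_lt (div_pos h2 h3)) j
  positivity

lemma qab_le (hi : 0 < i) (hj : 0 < j) (hij : i + j = 1) (K : ℕ) :
    (qs i j x H (K+1) : ℝ) * (aK i j x H (K+1) * bK i j x H (K+1))
      ≤ 9 / (((K+1:ℕ):ℝ))^2 := by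
  set k : ℝ := ((K+1:ℕ):ℝ) with hkdef
  set qr : ℝ := (qs i j x H (K+1) : ℝ) with hqdef
  have hk : 1 ≤ k := by rw [hkdef]; exact_mod_cast Nat.one_le_iff_ne_zero.2 (Nat.succ_ne_zero K)
  have hq : 1 ≤ qr := by rw [hqdef]; exact_mod_cast qs_pos i j x H K
  have hk0 : (0:ℝ) < k := lt_of_lt_of_le one_pos hk
  have hq0 : (0:ℝ) < qr := lt_of_lt_of_le one_pos hq
  have htk : tK i j x H (K+1) = (k^2 * qr)⁻¹ := by
    rw [tK, Rs_succ, hkdef, hqdef]; push_cast; ring_nf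
  have hepsq : epsq i j (K+1) = (k⁻¹) ^ (6+6/i+6/j) := by rw [epsq, hkdef]
  have ht0 : (0:ℝ) < tK i j x H (K+1) := tK_pos i j x H K
  have he0 : (0:ℝ) < epsq i j (K+1) := epsq_pos i j K
  have hk2 : 1 ≤ k^2 := one_le_pow₀ hk
  have htq : tK i j x H (K+1) ≤ qr⁻¹ := by
    rw [htk]
    apply inv_anti₀ hq0
    nlinarith [hk2, hq0]
  have hqt : qr * tK i j x H (K+1) = (k^2)⁻¹ := by
    rw [htk]; field_simp; try ring
  have hei : epsq i j (K+1) ^ i ≤ (k^6)⁻¹ := by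
    rw [hepsq]; exact epsq_rpow_le_i i j hi hj k hk
  have hej : epsq i j (K+1) ^ j ≤ (k^6)⁻¹ := by
    rw [hepsq, show (6+6/i+6/j) = (6+6/j+6/i) by ring]
    exact epsq_rpow_le_i j i hj hi k hk
  have he6 : epsq i j (K+1) ≤ (k^6)⁻¹ := by
    rw [hepsq]; exact epsq_le i j hi hj k hk
  have := core_bound' i j (tK i j x H (K+1)) (epsq i j (K+1)) k qr hi hj hij
    hk hq ht0 he0 htq hqt hei hej he6
  unfold aK bK
  calc qr * ((tK i j x H (K+1) ^ i + (k^2+1) * ((epsq i j (K+1) / qr) ^ i))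
       * (tK i j x H (K+1) ^ j + (k^2+1) * ((epsq i j (K+1) / qr) ^ j))) ≤ 9 / k^2 := this

lemma vol_prod_Ucov (c1 c2 a b : ℝ) (ha : 0 ≤ a) (hb : 0 ≤ b) :
    volume ((Ucov c1 a) ×ˢ (Ucov c2 b)) ≤ ENNReal.ofReal (36 * (a * b)) := by
  rw [MeasureTheory.Measure.volume_eq_prod, MeasureTheory.Measure.prod_prod]
  calc volume (Ucov c1 a) * volume (Ucov c2 b)
      ≤ ENNReal.ofReal (6*a) * ENNReal.ofReal (6*b) :=
        mul_le_mul' (Ucov_vol _ _) (Ucov_vol _ _)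
    _ = ENNReal.ofReal (36 * (a*b)) := by
        rw [← ENNReal.ofReal_mul (by positivity)]
        ring_nf

lemma Fcov_vol (hi : 0 < i) (hj : 0 < j) (hij : i + j = 1) (K : ℕ) :
    volume (Fcov i j x H (K+1)) ≤ ENNReal.ofReal (324 / (((K+1:ℕ):ℝ))^2) := by
  have ha := aK_nonneg i j x H K hi
  have hb := bK_nonneg i j x H K hj
  calc volume (Fcov i j x H (K+1))
      ≤ ∑ r ∈ Finset.range (qs i j x H (K+1)),
          volume ((Ucov ((r:ℝ) * x.1) (aK i j x H (K+1))) ×ˢ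
                  (Ucov ((r:ℝ) * x.2) (bK i j x H (K+1)))) :=
        measure_biUnion_finset_le _ _
    _ ≤ ∑ r ∈ Finset.range (qs i j x H (K+1)),
          ENNReal.ofReal (36 * (aK i j x H (K+1) * bK i j x H (K+1))) := by
        apply Finset.sum_le_sum
        intro r _
        exact vol_prod_Ucov _ _ _ _ ha hb
    _ = (qs i j x H (K+1) : ENNReal) * ENNReal.ofReal (36 * (aK i j x H (K+1) * bK i j x H (K+1))) := by
        rw [Finset.sum_const, Finset.card_range, nsmul_eq_mul]
    _ = ENNReal.ofReal ((qs i j x H (K+1) : ℝ) * (36 * (aK i j x H (K+1) * bK i j x H (K+1)))) := by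
        rw [← ENNReal.ofReal_natCast (qs i j x H (K+1)),
          ← ENNReal.ofReal_mul (by positivity)]
    _ ≤ ENNReal.ofReal (324 / (((K+1:ℕ):ℝ))^2) := by
        apply ENNReal.ofReal_le_ofReal
        have h := qab_le i j x H hi hj hij K
        have h2 : (qs i j x H (K+1) : ℝ) * (36 * (aK i j x H (K+1) * bK i j x H (K+1)))
            = 36 * ((qs i j x H (K+1) : ℝ) * (aK i j x H (K+1) * bK i j x H (K+1))) := by ring
        rw [h2]
        calc 36 * ((qs i j x H (K+1) : ℝ) * (aK i j x H (K+1) * bK i j x H (K+1)))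
            ≤ 36 * (9 / (((K+1:ℕ):ℝ))^2) := by
              apply mul_le_mul_of_nonneg_left h (by norm_num)
          _ = 324 / (((K+1:ℕ):ℝ))^2 := by ring

-- ### membership in the cover

lemma mem_Fcov (hi : 0 < i) (hj : 0 < j) (γ : ℝ × ℝ) (hγ : γ ∈ Set.Icc (0:ℝ×ℝ) 1) (q : ℤ) (K : ℕ)
    (hq1 : Rs i j x H K < q.natAbs) (hq2 : q.natAbs ≤ Rs i j x H (K+1))
    (hmax : max (pw (nint (q * x.1 - γ.1)) i) (pw (nint (q * x.2 - γ.2)) j)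
        ≤ ψc i j x H q.natAbs) :
    γ ∈ Fcov i j x H (K+1) := by
  have hγ1 : γ.1 ∈ Set.Icc (0:ℝ) 1 := ⟨hγ.1.1, hγ.2.1⟩
  have hγ2 : γ.2 ∈ Set.Icc (0:ℝ) 1 := ⟨hγ.1.2, hγ.2.2⟩
  have hψ : ψc i j x H q.natAbs = tK i j x H (K+1) := by
    unfold ψc
    rw [blk_eq i j x H _ K hq1 hq2, Nat.max_eq_left (by omega)]
  rw [hψ] at hmax
  set t : ℝ := tK i j x H (K+1) with htdef
  set qk : ℕ := qs i j x H (K+1) with hqkdef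
  set e : ℝ := epsq i j (K+1) with hedef
  have hqk0 : 0 < qk := qs_pos i j x H K
  have hqk0' : (0:ℝ) < qk := by exact_mod_cast hqk0
  have ht0 : 0 < t := tK_pos i j x H K
  -- bounds from the twisted inequality
  have h1 : nint ((q:ℝ) * x.1 - γ.1) ≤ t ^ i :=
    le_rpow_of_pw_le (nint_nonneg _) hi (le_trans (le_max_left _ _) hmax)
  have h2 : nint ((q:ℝ) * x.2 - γ.2) ≤ t ^ j :=
    le_rpow_of_pw_le (nint_nonneg _) hj (le_trans (le_max_right _ _) hmax)
  -- bounds on ‖qk x‖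
  have hspec := (qs_spec i j x H K).2
  have hd1 : nint ((qk:ℝ) * x.1) ≤ (e / qk) ^ i := by
    apply le_rpow_of_pw_le (nint_nonneg _) hi
    exact le_of_lt (lt_of_le_of_lt (le_max_left _ _) hspec)
  have hd2 : nint ((qk:ℝ) * x.2) ≤ (e / qk) ^ j := by
    apply le_rpow_of_pw_le (nint_nonneg _) hj
    exact le_of_lt (lt_of_le_of_lt (le_max_right _ _) hspec)
  -- division with remainder
  set m : ℤ := q / (qk:ℤ) with hmdef
  set r : ℤ := q % (qk:ℤ) with hrdef
  have hqkz : ((qk:ℤ)) ≠ 0 := by exact_mod_cast Nat.pos_iff_ne_zero.1 hqk0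
  have hdecomp : (qk:ℤ) * m + r = q := Int.mul_ediv_add_emod q (qk:ℤ)
  have hr0 : 0 ≤ r := Int.emod_nonneg q hqkz
  have hrlt : r < (qk:ℤ) := Int.emod_lt_of_pos q (by exact_mod_cast hqk0)
  -- bound on |m|
  have hm : |(m:ℝ)| ≤ (((K+1:ℕ):ℝ))^2 + 1 := by
    have hq' : (q.natAbs : ℝ) ≤ ((Rs i j x H (K+1) : ℕ) : ℝ) := by exact_mod_cast hq2
    have hRs : ((Rs i j x H (K+1) : ℕ) : ℝ) = (((K+1:ℕ):ℝ))^2 * qk := by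
      rw [Rs_succ]; push_cast; ring
    have habs : |(m:ℝ)| * qk ≤ (((K+1:ℕ):ℝ))^2 * qk + qk := by
      have e1 : (m:ℝ) * qk = (q:ℝ) - r := by
        have : ((qk:ℤ) * m + r : ℤ) = q := hdecomp
        have := congrArg (fun z : ℤ => (z:ℝ)) this
        push_cast at this
        linarith
      have e2 : |(m:ℝ)| * qk = |(m:ℝ) * qk| := by
        rw [abs_mul, abs_of_pos hqk0']
      rw [e2, e1]
      have e3 : |(q:ℝ) - (r:ℝ)| ≤ |(q:ℝ)| + |(r:ℝ)| := by
        calc |(q:ℝ) - (r:ℝ)| = |(q:ℝ) + (-(r:ℝ))| := by ring_nf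
          _ ≤ |(q:ℝ)| + |(-(r:ℝ))| := abs_add_le _ _
          _ = |(q:ℝ)| + |(r:ℝ)| := by rw [abs_neg]
      have e4 : |(q:ℝ)| = (q.natAbs : ℝ) := by
        rw [Nat.cast_natAbs (n := q), Int.cast_abs]
      have e5 : |(r:ℝ)| ≤ (qk:ℝ) := by
        rw [abs_of_nonneg (by exact_mod_cast hr0)]
        exact_mod_cast le_of_lt hrlt
      calc |(q:ℝ) - r| ≤ |(q:ℝ)| + |(r:ℝ)| := e3
        _ ≤ (((K+1:ℕ):ℝ))^2 * qk + qk := by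
            rw [e4]
            apply add_le_add _ e5
            rw [← hRs]; exact hq'
    calc |(m:ℝ)| = |(m:ℝ)| * qk / qk := by field_simp
      _ ≤ ((((K+1:ℕ):ℝ))^2 * qk + qk) / qk := by gcongr
      _ = (((K+1:ℕ):ℝ))^2 + 1 := by field_simp
  -- the two nint bounds for the reduced point
  have key1 : nint ((r:ℝ) * x.1 - γ.1) ≤ aK i j x H (K+1) := by
    set p : ℤ := round ((qk:ℝ) * x.1) with hpdef
    have hp : |(qk:ℝ) * x.1 - p| ≤ (e/qk) ^ i := hd1
    have hrw : (r:ℝ) * x.1 - γ.1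
        = (((q:ℝ) * x.1 - γ.1) + (-((m:ℝ) * ((qk:ℝ) * x.1 - p)))) + ((-(m * p) : ℤ) : ℝ) := by
      have e1 : (r:ℝ) = (q:ℝ) - (qk:ℝ) * m := by
        have := congrArg (fun z : ℤ => (z:ℝ)) hdecomp
        push_cast at this
        linarith
      push_cast
      rw [e1]; ring
    rw [hrw, nint_add_int]
    calc nint (((q:ℝ) * x.1 - γ.1) + (-((m:ℝ) * ((qk:ℝ) * x.1 - p))))
        ≤ nint ((q:ℝ) * x.1 - γ.1) + |(-((m:ℝ) * ((qk:ℝ) * x.1 - p)))| := nint_add_le _ _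
      _ ≤ t ^ i + ((((K+1:ℕ):ℝ))^2 + 1) * ((e/qk) ^ i) := by
          apply add_le_add h1
          rw [abs_neg, abs_mul]
          apply mul_le_mul hm hp (abs_nonneg _) (by positivity)
      _ = aK i j x H (K+1) := rfl
  have key2 : nint ((r:ℝ) * x.2 - γ.2) ≤ bK i j x H (K+1) := by
    set p : ℤ := round ((qk:ℝ) * x.2) with hpdef
    have hp : |(qk:ℝ) * x.2 - p| ≤ (e/qk) ^ j := hd2
    have hrw : (r:ℝ) * x.2 - γ.2
        = (((q:ℝ) * x.2 - γ.2) + (-((m:ℝ) * ((qk:ℝ) * x.2 - p)))) + ((-(m * p) : ℤ) : ℝ) := by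
      have e1 : (r:ℝ) = (q:ℝ) - (qk:ℝ) * m := by
        have := congrArg (fun z : ℤ => (z:ℝ)) hdecomp
        push_cast at this
        linarith
      push_cast
      rw [e1]; ring
    rw [hrw, nint_add_int]
    calc nint (((q:ℝ) * x.2 - γ.2) + (-((m:ℝ) * ((qk:ℝ) * x.2 - p))))
        ≤ nint ((q:ℝ) * x.2 - γ.2) + |(-((m:ℝ) * ((qk:ℝ) * x.2 - p)))| := nint_add_le _ _
      _ ≤ t ^ j + ((((K+1:ℕ):ℝ))^2 + 1) * ((e/qk) ^ j) := by
          apply add_le_add h2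
          rw [abs_neg, abs_mul]
          apply mul_le_mul hm hp (abs_nonneg _) (by positivity)
      _ = bK i j x H (K+1) := rfl
  -- conclude
  have hrnat : r.toNat ∈ Finset.range qk := by
    rw [Finset.mem_range]
    omega
  have hrcast : ((r.toNat : ℕ) : ℝ) = (r:ℝ) := by
    exact_mod_cast congrArg (fun z : ℤ => (z:ℝ)) (Int.toNat_of_nonneg hr0)
  apply Set.mem_biUnion hrnat
  constructor
  · apply mem_Ucov hγ1.1 hγ1.2
    rw [hrcast]
    exact key1
  · apply mem_Ucov hγ2.1 hγ2.2
    rw [hrcast]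
    exact key2


-- ### non-summability of ψc

lemma ψc_block (K r : ℕ) (h1 : Rs i j x H K < r) (h2 : r ≤ Rs i j x H (K+1)) :
    ψc i j x H r = tK i j x H (K+1) := by
  unfold ψc
  rw [blk_eq i j x H r K h1 h2, Nat.max_eq_left (by omega)]

lemma ψc_blocksum (K : ℕ) :
    (1:ℝ)/2 ≤ ∑ r ∈ Finset.Ioc (Rs i j x H K) (Rs i j x H (K+1)), ψc i j x H r := by
  have hval : ∀ r ∈ Finset.Ioc (Rs i j x H K) (Rs i j x H (K+1)),
      ψc i j x H r = tK i j x H (K+1) := by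
    intro r hr
    rw [Finset.mem_Ioc] at hr
    exact ψc_block i j x H K r hr.1 hr.2
  rw [Finset.sum_congr rfl hval, Finset.sum_const, Nat.card_Ioc, nsmul_eq_mul]
  have hmono : Rs i j x H K ≤ Rs i j x H (K+1) := le_of_lt (Rs_lt_succ i j x H K)
  have hcast : ((Rs i j x H (K+1) - Rs i j x H K : ℕ) : ℝ)
      = (Rs i j x H (K+1) : ℝ) - (Rs i j x H K : ℝ) := by
    push_cast [hmono]
    ring
  rw [hcast]
  set A : ℝ := (Rs i j x H K : ℝ) with hA
  set B : ℝ := (Rs i j x H (K+1) : ℝ) with hBdef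
  have hB : (0:ℝ) < B := by rw [hBdef]; exact_mod_cast Rs_pos i j x H K
  have h2B : 2 * A ≤ B := by rw [hA, hBdef]; exact_mod_cast Rs_two_mul i j x H K
  have htK : tK i j x H (K+1) = B⁻¹ := rfl
  rw [htK, ← div_eq_mul_inv, le_div_iff₀ hB]
  linarith

lemma ψc_partial (K : ℕ) :
    (K:ℝ)/2 ≤ ∑ r ∈ Finset.Ioc 0 (Rs i j x H K), ψc i j x H r := by
  induction K with
  | zero => rw [Rs_zero]; simp
  | succ K ih =>
      have hcons := Finset.sum_Ioc_consecutive (f := ψc i j x H)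
        (Nat.zero_le (Rs i j x H K)) (le_of_lt (Rs_lt_succ i j x H K))
      have hblock := ψc_blocksum i j x H K
      push_cast
      rw [← hcons] at *
      push_cast at ih
      linarith

lemma ψc_not_summable : ¬ Summable (ψc i j x H) := by
  intro hs
  obtain ⟨K, hK⟩ := exists_nat_gt (2 * ∑' r, ψc i j x H r)
  have h1 := ψc_partial i j x H K
  have h2 : ∑ r ∈ Finset.Ioc 0 (Rs i j x H K), ψc i j x H r ≤ ∑' r, ψc i j x H r :=
    hs.sum_le_tsum _ (fun r _ => le_of_lt (ψc_pos i j x H r))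
  linarith

-- ### the zero-measure conclusion

lemma vol_twisted_zero (hi : 0 < i) (hj : 0 < j) (hij : i + j = 1) :
    volume (twistedW x i j (ψc i j x H)) = 0 := by
  have hsub : twistedW x i j (ψc i j x H)
      ⊆ limsup (fun K => Fcov i j x H (K+1)) atTop := by
    intro γ hγ
    obtain ⟨hIcc, hinf⟩ := hγ
    rw [Filter.mem_limsup_iff_frequently_mem]
    apply frequently_atTop.2
    intro N
    have hlarge : ∃ q : ℤ, (q ≠ 0 ∧
        max (pw (nint (q * x.1 - γ.1)) i) (pw (nint (q * x.2 - γ.2)) j)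
          ≤ ψc i j x H q.natAbs) ∧ Rs i j x H (N+1) < q.natAbs := by
      by_contra hcon
      push_neg at hcon
      apply hinf
      apply Set.Finite.subset
        (Set.finite_Icc (-(Rs i j x H (N+1) : ℤ)) (Rs i j x H (N+1) : ℤ))
      intro q hq
      have hb := hcon q hq
      rw [Set.mem_Icc]
      omega
    obtain ⟨q, hqmem, hqgt⟩ := hlarge
    set B := blk i j x H q.natAbs with hBdef
    have hBle : q.natAbs ≤ Rs i j x H B :=
      Nat.find_spec (⟨q.natAbs, Rs_ge i j x H q.natAbs⟩ : ∃ K, q.natAbs ≤ Rs i j x H K)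
    have hBgt : N + 1 < B := by
      by_contra hle
      push_neg at hle
      have := (blk_le_iff i j x H q.natAbs (N+1)).1 (le_trans (le_of_eq hBdef.symm) hle)
      omega
    refine ⟨B - 1, by omega, ?_⟩
    have hBeq : B - 1 + 1 = B := by omega
    have hRlt : Rs i j x H (B-1) < q.natAbs := by
      by_contra hcon2
      push_neg at hcon2
      have := (blk_le_iff i j x H q.natAbs (B-1)).2 hcon2
      omega
    have hRle : q.natAbs ≤ Rs i j x H (B-1+1) := by rw [hBeq]; exact hBle
    have := mem_Fcov i j x H hi hj γ hIcc q (B-1) hRlt hRle hqmem.2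
    simpa [hBeq] using this
  have hbig : (∑' K : ℕ, ENNReal.ofReal (324 / (((K+1:ℕ):ℝ))^2)) ≠ ⊤ := by
    have hs0 : Summable (fun n : ℕ => (1:ℝ) / (n:ℝ)^2) :=
      Real.summable_one_div_nat_pow.2 (by norm_num)
    have hs1 := (summable_nat_add_iff (f := fun n : ℕ => (1:ℝ)/(n:ℝ)^2) 1).2 hs0
    have hs : Summable (fun K : ℕ => 324 / (((K+1:ℕ):ℝ))^2) := by
      apply Summable.congr (hs1.mul_left 324)
      intro n
      push_cast
      ring
    rw [← ENNReal.ofReal_tsum_of_nonneg (fun n => by positivity) hs]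
    exact ENNReal.ofReal_ne_top
  have hsum : (∑' K : ℕ, volume (Fcov i j x H (K+1))) ≠ ⊤ :=
    ne_top_of_le_ne_top hbig
      (ENNReal.tsum_le_tsum (fun K => Fcov_vol i j x H hi hj hij K))
  have h0 : volume (limsup (fun K => Fcov i j x H (K+1)) atTop) = 0 :=
    measure_limsup_atTop_eq_zero hsum
  exact le_antisymm (h0 ▸ measure_mono hsub) zero_le

end Construction

theorem stmt9 (i j : ℝ) (hi : 0 < i) (hj : 0 < j) (hij : i + j = 1)
    (x : ℝ × ℝ)
    (hnotbad : ∀ c > (0 : ℝ), ∃ q : ℕ, 0 < q ∧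
      max (pw (nint (q * x.1)) i) (pw (nint (q * x.2)) j) < c / q) :
    ∃ ψ₀ : ℕ → ℝ, (∀ r, 0 < ψ₀ r) ∧ Antitone ψ₀ ∧ ¬ Summable ψ₀ ∧
      volume (twistedW x i j ψ₀) = 0 := by
  have H := exists_large_q i j hi hj x hnotbad
  exact ⟨ψc i j x H, ψc_pos i j x H, ψc_anti i j x H, ψc_not_summable i j x H,
    vol_twisted_zero i j x H hi hj hij⟩
end

section
/- Fix reals i, j > 0 with i + j = 1 and let x ∈ Bad(i,j) be irrational. Then for every strictly positive non-increasing ψ : ℕ → ℝ with ∑_{r=1}^∞ ψ(r) = ∞, the set W^x_{(i,j)}(ψ) has 2-dimensional Lebesgue measure equal to 1. -/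
open MeasureTheory Set Filter

open scoped ENNReal NNReal

noncomputable section

local notation "𝕋" => AddCircle (1:ℝ)

/-- Gap-sum lemma: if `S ⊆ (q, N]` has all elements at distance `> D` from `q` and
pairwise distances `> D`, and `g` is antitone nonnegative, then
`D * ∑_{r ∈ S} g r ≤ ∑_{s ∈ (q, N]} g s`. -/
lemma gap_sum (g : ℕ → ℝ) (hganti : Antitone g) (hg0 : ∀ n, 0 ≤ g n) (D : ℝ) :
    ∀ (n : ℕ) (S : Finset ℕ) (q N : ℕ), S.card = n → S ⊆ Finset.Ioc q N →
    (∀ r ∈ S, D < (r : ℝ) - q) →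
    (∀ r ∈ S, ∀ r' ∈ S, r < r' → D < (r' : ℝ) - r) →
    D * ∑ r ∈ S, g r ≤ ∑ s ∈ Finset.Ioc q N, g s := by
  intro n
  induction n with
  | zero =>
    intro S q N hcard _ _ _
    rw [Finset.card_eq_zero.mp hcard]
    simpa using Finset.sum_nonneg fun s _ => hg0 s
  | succ n ih =>
    intro S q N hcard hsub hgap1 hgap2
    have hne : S.Nonempty := Finset.card_pos.mp (by omega)
    set r₁ := S.min' hne with hr₁
    have hr₁S : r₁ ∈ S := S.min'_mem hne
    have hqr₁ : q < r₁ := (Finset.mem_Ioc.mp (hsub hr₁S)).1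
    have hr₁N : r₁ ≤ N := (Finset.mem_Ioc.mp (hsub hr₁S)).2
    have hsplit : ∑ r ∈ S, g r = g r₁ + ∑ r ∈ S.erase r₁, g r :=
      (Finset.add_sum_erase _ _ hr₁S).symm
    have h1 : D * g r₁ ≤ ∑ s ∈ Finset.Ioc q r₁, g s := by
      have hcard1 : (Finset.Ioc q r₁).card = r₁ - q := Nat.card_Ioc q r₁
      have hle : ∀ s ∈ Finset.Ioc q r₁, g r₁ ≤ g s := fun s hs =>
        hganti (Finset.mem_Ioc.mp hs).2
      have := Finset.card_nsmul_le_sum (Finset.Ioc q r₁) g (g r₁) hle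
      rw [hcard1, nsmul_eq_mul] at this
      calc D * g r₁ ≤ ((r₁ : ℝ) - q) * g r₁ := by
            apply mul_le_mul_of_nonneg_right (le_of_lt (hgap1 r₁ hr₁S)) (hg0 r₁)
        _ = ((r₁ - q : ℕ) : ℝ) * g r₁ := by
            rw [Nat.cast_sub hqr₁.le]
        _ ≤ ∑ s ∈ Finset.Ioc q r₁, g s := this
    have h2 : D * ∑ r ∈ S.erase r₁, g r ≤ ∑ s ∈ Finset.Ioc r₁ N, g s := by
      apply ih (S.erase r₁) r₁ N
      · rw [Finset.card_erase_of_mem hr₁S, hcard]; omega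
      · intro r hr
        have hrS := Finset.mem_of_mem_erase hr
        have hrne := Finset.ne_of_mem_erase hr
        have : r₁ < r := lt_of_le_of_ne (S.min'_le r hrS) (Ne.symm hrne)
        exact Finset.mem_Ioc.mpr ⟨this, (Finset.mem_Ioc.mp (hsub hrS)).2⟩
      · intro r hr
        have hrS := Finset.mem_of_mem_erase hr
        have hrne := Finset.ne_of_mem_erase hr
        exact hgap2 r₁ hr₁S r hrS (lt_of_le_of_ne (S.min'_le r hrS) (Ne.symm hrne))
      · intro r hr r' hr' hlt
        exact hgap2 r (Finset.mem_of_mem_erase hr) r' (Finset.mem_of_mem_erase hr') hlt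
    calc D * ∑ r ∈ S, g r = D * g r₁ + D * ∑ r ∈ S.erase r₁, g r := by
          rw [hsplit]; ring
      _ ≤ ∑ s ∈ Finset.Ioc q r₁, g s + ∑ s ∈ Finset.Ioc r₁ N, g s := add_le_add h1 h2
      _ = ∑ s ∈ Finset.Ioc q N, g s := Finset.sum_Ioc_consecutive g hqr₁.le hr₁N

/-- Second moment (Cauchy–Schwarz) inequality for unions. -/
lemma second_moment {α : Type*} [MeasurableSpace α] (μ : Measure α)
    (s : Finset ℕ) (A : ℕ → Set α) (hA : ∀ q, MeasurableSet (A q)) :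
    (∑ q ∈ s, μ (A q)) ^ 2 ≤ μ (⋃ q ∈ s, A q) * ∑ q ∈ s, ∑ r ∈ s, μ (A q ∩ A r) := by
  classical
  set U : Set α := ⋃ q ∈ s, A q with hU
  have hUm : MeasurableSet U := MeasurableSet.biUnion s.countable_toSet fun q _ => hA q
  set f : α → ℝ≥0∞ := fun a => ∑ q ∈ s, (A q).indicator (fun _ => (1 : ℝ≥0∞)) a with hf
  set g : α → ℝ≥0∞ := fun a => U.indicator (fun _ => (1 : ℝ≥0∞)) a with hg
  have hfm : Measurable f := Finset.measurable_sum s fun q _ =>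
    measurable_const.indicator (hA q)
  have hgm : Measurable g := measurable_const.indicator hUm
  have hfg : ∀ a, f a = f a * g a := by
    intro a
    by_cases ha : a ∈ U
    · simp [hg, Set.indicator_of_mem ha]
    · have : f a = 0 := by
        apply Finset.sum_eq_zero
        intro q hq
        apply Set.indicator_of_notMem
        intro hmem
        exact ha (Set.mem_biUnion hq hmem)
      simp [this]
  have hint_f : ∫⁻ a, f a ∂μ = ∑ q ∈ s, μ (A q) := by
    rw [hf, lintegral_finset_sum s fun q _ => measurable_const.indicator (hA q)]
    congr 1; ext q
    rw [lintegral_indicator (hA q)]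
    simp
  have hint_f2 : ∫⁻ a, f a ^ (2:ℝ) ∂μ = ∑ q ∈ s, ∑ r ∈ s, μ (A q ∩ A r) := by
    have hsq : ∀ a, f a ^ (2:ℝ) =
        ∑ q ∈ s, ∑ r ∈ s, (A q ∩ A r).indicator (fun _ => (1 : ℝ≥0∞)) a := by
      intro a
      rw [show (2:ℝ) = ((2:ℕ):ℝ) by norm_num, ENNReal.rpow_natCast, sq, hf,
        Finset.sum_mul_sum]
      congr 1; ext q; congr 1; ext r
      rw [← Set.inter_indicator_mul]
      simp
    rw [lintegral_congr hsq, lintegral_finset_sum]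
    · congr 1; ext q
      rw [lintegral_finset_sum]
      · congr 1; ext r
        rw [lintegral_indicator ((hA q).inter (hA r))]
        simp
      · exact fun r _ => measurable_const.indicator ((hA q).inter (hA r))
    · exact fun q _ => Finset.measurable_sum s fun r _ =>
        measurable_const.indicator ((hA q).inter (hA r))
  have hint_g2 : ∫⁻ a, g a ^ (2:ℝ) ∂μ = μ U := by
    have : ∀ a, g a ^ (2:ℝ) = U.indicator (fun _ => (1 : ℝ≥0∞)) a := by
      intro a
      by_cases ha : a ∈ U <;>
        simp [hg, Set.indicator_of_mem, Set.indicator_of_notMem, ha,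
          ENNReal.zero_rpow_of_pos (by norm_num : (0:ℝ) < 2)]
    rw [lintegral_congr this, lintegral_indicator hUm]
    simp
  have holder := ENNReal.lintegral_mul_le_Lp_mul_Lq μ
    Real.HolderConjugate.two_two hfm.aemeasurable hgm.aemeasurable
  rw [show (fun a => (f * g) a) = fun a => f a * g a from rfl] at holder
  have h1 : ∫⁻ a, f a * g a ∂μ = ∑ q ∈ s, μ (A q) := by
    rw [← hint_f]; exact lintegral_congr fun a => (hfg a).symm
  rw [h1, hint_f2, hint_g2] at holder
  calc (∑ q ∈ s, μ (A q)) ^ 2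
      ≤ ((∑ q ∈ s, ∑ r ∈ s, μ (A q ∩ A r)) ^ (1/2 : ℝ) * μ U ^ (1/2 : ℝ)) ^ 2 := by
        exact pow_le_pow_left' holder 2
    _ = μ U * ∑ q ∈ s, ∑ r ∈ s, μ (A q ∩ A r) := by
        rw [mul_pow, ← ENNReal.rpow_natCast (_ ^ (1/2:ℝ)), ← ENNReal.rpow_natCast (μ U ^ (1/2:ℝ)),
          ← ENNReal.rpow_mul, ← ENNReal.rpow_mul]
        norm_num [mul_comm]


/-- Density of `ℤ + ℤθ` for `θ` "irrational". -/
lemma dense1D (θ : ℝ) (hθ : ∀ n m : ℤ, (n:ℝ)*θ + m = 0 → n = 0) :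
    Dense ((AddSubgroup.closure {1, θ} : AddSubgroup ℝ) : Set ℝ) := by
  rcases AddSubgroup.dense_or_cyclic (AddSubgroup.closure {1, θ}) with h | ⟨a, ha⟩
  · exact h
  · exfalso
    have h1 : (1:ℝ) ∈ AddSubgroup.closure ({1, θ} : Set ℝ) :=
      AddSubgroup.subset_closure (by simp)
    have h2 : θ ∈ AddSubgroup.closure ({1, θ} : Set ℝ) :=
      AddSubgroup.subset_closure (by simp)
    rw [ha, AddSubgroup.mem_closure_singleton] at h1 h2
    obtain ⟨n, hn⟩ := h1
    obtain ⟨m, hm⟩ := h2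
    rw [zsmul_eq_mul] at hn hm
    have hkey : (n:ℝ) * θ = (m:ℝ) := by
      calc (n:ℝ) * θ = (n:ℝ) * ((m:ℝ) * a) := by rw [hm]
        _ = (m:ℝ) * ((n:ℝ) * a) := by ring
        _ = (m:ℝ) := by rw [hn]; ring
    have hn0 : n = 0 := hθ n (-m) (by push_cast; linarith)
    rw [hn0] at hn
    norm_num at hn

/-- The subgroup `ℤ² + ℤ(x1,x2)` of `ℝ²`. -/
def Lgrp (x1 x2 : ℝ) : AddSubgroup (ℝ × ℝ) :=
  AddSubgroup.closure {((1:ℝ), (0:ℝ)), ((0:ℝ), (1:ℝ)), (x1, x2)}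

lemma mem_Lgrp (x1 x2 : ℝ) (m n k : ℤ) :
    (((m:ℝ) + k * x1, (n:ℝ) + k * x2) : ℝ × ℝ) ∈ Lgrp x1 x2 := by
  have h1 : ((1:ℝ), (0:ℝ)) ∈ Lgrp x1 x2 := AddSubgroup.subset_closure (by simp)
  have h2 : ((0:ℝ), (1:ℝ)) ∈ Lgrp x1 x2 := AddSubgroup.subset_closure (by simp)
  have h3 : ((x1, x2) : ℝ × ℝ) ∈ Lgrp x1 x2 := AddSubgroup.subset_closure (by simp)
  have key : (((m:ℝ) + k * x1, (n:ℝ) + k * x2) : ℝ × ℝ)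
      = m • ((1:ℝ), (0:ℝ)) + n • ((0:ℝ), (1:ℝ)) + k • ((x1, x2) : ℝ × ℝ) := by
    have e1 : (m • ((1:ℝ), (0:ℝ)) : ℝ × ℝ) = ((m:ℝ), (0:ℝ)) := by
      rw [Prod.ext_iff]; simp [zsmul_eq_mul]
    have e2 : (n • ((0:ℝ), (1:ℝ)) : ℝ × ℝ) = ((0:ℝ), (n:ℝ)) := by
      rw [Prod.ext_iff]; simp [zsmul_eq_mul]
    have e3 : (k • ((x1, x2) : ℝ × ℝ)) = ((k:ℝ) * x1, (k:ℝ) * x2) := by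
      rw [Prod.ext_iff]; simp [zsmul_eq_mul]
    rw [e1, e2, e3, Prod.ext_iff]
    constructor <;> simp
  rw [key]
  exact add_mem (add_mem (zsmul_mem h1 m) (zsmul_mem h2 n)) (zsmul_mem h3 k)

/-- Kronecker: density of `ℤ² + ℤ(x1,x2)` in `ℝ²`. -/
theorem dense_Lgrp (x1 x2 : ℝ)
    (hirr : ∀ a b c : ℤ, (a : ℝ) * x1 + (b : ℝ) * x2 + (c : ℝ) = 0 → a = 0 ∧ b = 0 ∧ c = 0) :
    Dense ((Lgrp x1 x2 : AddSubgroup (ℝ × ℝ)) : Set (ℝ × ℝ)) := by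
  classical
  set L := Lgrp x1 x2 with hLdef
  set C := L.topologicalClosure with hCdef
  have hCclosed : IsClosed (C : Set (ℝ × ℝ)) := L.isClosed_topologicalClosure
  have hCc : (C : Set (ℝ × ℝ)) = closure (L : Set (ℝ × ℝ)) := rfl
  have hLC : ∀ z ∈ L, z ∈ C := fun z hz => L.le_topologicalClosure hz
  have approx_dense : (∀ p : ℝ × ℝ, ∀ ε : ℝ, 0 < ε → ∃ z, z ∈ C ∧ dist p z < ε) →
      Dense ((L : AddSubgroup (ℝ × ℝ)) : Set (ℝ × ℝ)) := by
    intro h p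
    have h1 : p ∈ closure (C : Set (ℝ × ℝ)) := by
      rw [Metric.mem_closure_iff]
      intro ε hε
      obtain ⟨z, hz, hd⟩ := h p ε hε
      exact ⟨z, hz, hd⟩
    rw [hCclosed.closure_eq] at h1
    rw [hCc] at h1
    exact h1
  -- vertical density criterion
  have vert_dense : (∀ t : ℝ, ((0:ℝ), t) ∈ C) →
      Dense ((L : AddSubgroup (ℝ×ℝ)) : Set (ℝ × ℝ)) := by
    intro hvert
    apply approx_dense
    rintro ⟨a, b⟩ ε hε
    have hd1 := dense1D x1 (fun n m h => (hirr n 0 m (by push_cast at h ⊢; linarith [h])).1)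
    have ha : a ∈ closure ((AddSubgroup.closure {1, x1} : AddSubgroup ℝ) : Set ℝ) := hd1 a
    rw [Metric.mem_closure_iff] at ha
    obtain ⟨y, hy, hdy⟩ := ha ε hε
    rw [SetLike.mem_coe, AddSubgroup.mem_closure_pair] at hy
    obtain ⟨m, k, hmk⟩ := hy
    rw [zsmul_eq_mul, zsmul_eq_mul, mul_one] at hmk
    have hP : (((m:ℝ) + k * x1, ((0:ℤ):ℝ) + k * x2) : ℝ × ℝ) ∈ C := hLC _ (mem_Lgrp x1 x2 m 0 k)
    have hQ : (((0:ℝ)), b - (((0:ℤ):ℝ) + k * x2)) ∈ C := hvert _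
    refine ⟨_, add_mem hP hQ, ?_⟩
    have heq : (((m:ℝ) + k * x1, ((0:ℤ):ℝ) + k * x2) : ℝ × ℝ)
        + ((0:ℝ), b - (((0:ℤ):ℝ) + k * x2)) = ((m:ℝ) + k * x1, b) := by
      rw [Prod.mk_add_mk, Prod.ext_iff]
      constructor <;> simp
    rw [heq, Prod.dist_eq]
    have hda : dist a ((m:ℝ) + k * x1) < ε := by
      rw [show (m:ℝ) + k * x1 = y by linarith [hmk]]
      exact hdy
    simp only [dist_self]
    exact max_lt hda hε
  -- horizontal density criterion
  have horiz_dense : (∀ t : ℝ, (t, (0:ℝ)) ∈ C) →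
      Dense ((L : AddSubgroup (ℝ×ℝ)) : Set (ℝ × ℝ)) := by
    intro hhoriz
    apply approx_dense
    rintro ⟨a, b⟩ ε hε
    have hd1 := dense1D x2 (fun n m h => (hirr 0 n m (by push_cast at h ⊢; linarith [h])).2.1)
    have hb : b ∈ closure ((AddSubgroup.closure {1, x2} : AddSubgroup ℝ) : Set ℝ) := hd1 b
    rw [Metric.mem_closure_iff] at hb
    obtain ⟨y, hy, hdy⟩ := hb ε hε
    rw [SetLike.mem_coe, AddSubgroup.mem_closure_pair] at hy
    obtain ⟨m, k, hmk⟩ := hy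
    rw [zsmul_eq_mul, zsmul_eq_mul, mul_one] at hmk
    have hP : ((((0:ℤ):ℝ) + k * x1, ((m:ℝ) + k * x2)) : ℝ × ℝ) ∈ C := hLC _ (mem_Lgrp x1 x2 0 m k)
    have hQ : ((a - (((0:ℤ):ℝ) + k * x1), (0:ℝ)) : ℝ × ℝ) ∈ C := hhoriz _
    refine ⟨_, add_mem hP hQ, ?_⟩
    have heq : ((((0:ℤ):ℝ) + k * x1, ((m:ℝ) + k * x2)) : ℝ × ℝ)
        + ((a - (((0:ℤ):ℝ) + k * x1), (0:ℝ))) = (a, (m:ℝ) + k * x2) := by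
      rw [Prod.mk_add_mk, Prod.ext_iff]
      constructor <;> simp
    rw [heq, Prod.dist_eq]
    have hdb : dist b ((m:ℝ) + k * x2) < ε := by
      rw [show (m:ℝ) + k * x2 = y by linarith [hmk]]
      exact hdy
    simp only [dist_self]
    exact max_lt hε hdb
  -- Step 1: a sequence of nonzero elements of L tending to 0
  obtain ⟨gseq, hgL, hgne, hgto⟩ :
      ∃ gseq : ℕ → ℝ × ℝ, (∀ n, gseq n ∈ L) ∧ (∀ n, gseq n ≠ 0) ∧
        Tendsto gseq atTop (nhds 0) := by
    set u : ℕ → ℝ × ℝ := fun q => (Int.fract (q * x1), Int.fract (q * x2)) with hu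
    have huL : ∀ q : ℕ, u q ∈ L := by
      intro q
      have := mem_Lgrp x1 x2 (-⌊(q:ℝ) * x1⌋) (-⌊(q:ℝ) * x2⌋) q
      have heq : ((((-⌊(q:ℝ) * x1⌋ : ℤ) : ℝ) + ((q:ℤ):ℝ) * x1,
          ((-⌊(q:ℝ) * x2⌋ : ℤ) : ℝ) + ((q:ℤ):ℝ) * x2) : ℝ × ℝ) = u q := by
        rw [hu]
        rw [Prod.mk.injEq]
        constructor <;> (rw [← Int.self_sub_floor]; push_cast; ring)
      rwa [heq] at this
    have huinj : Function.Injective u := by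
      intro q q' h
      rw [hu, Prod.ext_iff] at h
      by_contra hne
      have h1 : ((q:ℝ)) * x1 - ⌊(q:ℝ) * x1⌋ = (q':ℝ) * x1 - ⌊(q':ℝ) * x1⌋ := by
        have h2 := h.1
        simp only at h2
        rw [← Int.self_sub_floor, ← Int.self_sub_floor] at h2
        exact h2
      have key : (((q:ℤ) - q' : ℤ) : ℝ) * x1 + ((0:ℤ):ℝ) * x2 +
          ((⌊(q':ℝ) * x1⌋ - ⌊(q:ℝ) * x1⌋ : ℤ) : ℝ) = 0 := by
        push_cast
        linarith [h1]
      have := (hirr _ _ _ key).1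
      omega
    have humem : ∀ q, u q ∈ (Icc (0:ℝ) 1 ×ˢ Icc (0:ℝ) 1) := by
      intro q
      constructor <;> exact ⟨Int.fract_nonneg _, (Int.fract_lt_one _).le⟩
    obtain ⟨p₀, -, σ, hσmono, hσto⟩ :=
      (isCompact_Icc.prod isCompact_Icc).tendsto_subseq humem
    refine ⟨fun n => u (σ (n+1)) - u (σ n), fun n => sub_mem (huL _) (huL _), fun n => ?_, ?_⟩
    · intro h
      rw [sub_eq_zero] at h
      exact absurd (huinj h) (Nat.ne_of_gt (hσmono (Nat.lt_succ_self n)))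
    · have h1 : Tendsto (fun n => u (σ (n+1))) atTop (nhds p₀) :=
        hσto.comp (tendsto_add_atTop_nat 1)
      simpa using h1.sub hσto
  -- Step 2: a full line inside C
  obtain ⟨w, hwnorm, hline⟩ : ∃ w : ℝ × ℝ, ‖w‖ = 1 ∧ ∀ t : ℝ, t • w ∈ C := by
    set e : ℕ → ℝ × ℝ := fun n => ‖gseq n‖⁻¹ • gseq n with he
    have hemem : ∀ n, e n ∈ Metric.sphere (0 : ℝ × ℝ) 1 := by
      intro n
      rw [mem_sphere_zero_iff_norm, he, norm_smul, norm_inv, norm_norm,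
        inv_mul_cancel₀ (norm_ne_zero_iff.mpr (hgne n))]
    obtain ⟨w, hw, σ, hσmono, hσto⟩ := (isCompact_sphere (0:ℝ×ℝ) 1).tendsto_subseq hemem
    refine ⟨w, mem_sphere_zero_iff_norm.mp hw, fun t => ?_⟩
    have hnormto : Tendsto (fun n => ‖gseq (σ n)‖) atTop (nhds 0) := by
      have : Tendsto (fun n => gseq (σ n)) atTop (nhds 0) :=
        hgto.comp hσmono.tendsto_atTop
      simpa [Function.comp_def] using (continuous_norm.tendsto (0:ℝ×ℝ)).comp this
    set k : ℕ → ℤ := fun n => ⌊t / ‖gseq (σ n)‖⌋ with hk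
    set sc : ℕ → ℝ := fun n => (k n : ℝ) * ‖gseq (σ n)‖ with hsc
    have hscto : Tendsto sc atTop (nhds t) := by
      have hbound : ∀ n, ‖sc n - t‖ ≤ ‖gseq (σ n)‖ := by
        intro n
        have hpos : 0 < ‖gseq (σ n)‖ := norm_pos_iff.mpr (hgne (σ n))
        have hfl : (k n : ℝ) ≤ t / ‖gseq (σ n)‖ := Int.floor_le _
        have hfl2 : t / ‖gseq (σ n)‖ < k n + 1 := Int.lt_floor_add_one _
        rw [le_div_iff₀ hpos] at hfl
        rw [div_lt_iff₀ hpos] at hfl2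
        rw [Real.norm_eq_abs, abs_le]
        constructor
        · have hsceq : sc n = (k n : ℝ) * ‖gseq (σ n)‖ := rfl
          nlinarith [hfl, hfl2]
        · have hsceq : sc n = (k n : ℝ) * ‖gseq (σ n)‖ := rfl
          nlinarith [hfl, hfl2]
      have h0 : Tendsto (fun n => sc n - t) atTop (nhds 0) :=
        squeeze_zero_norm hbound hnormto
      have h2 : Tendsto (fun n => (sc n - t) + t) atTop (nhds (0 + t)) :=
        h0.add tendsto_const_nhds
      simpa using h2
    have heto : Tendsto (fun n => e (σ n)) atTop (nhds w) := hσto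
    have hsmulto : Tendsto (fun n => sc n • e (σ n)) atTop (nhds (t • w)) :=
      hscto.smul heto
    have hmem : ∀ n, sc n • e (σ n) ∈ (C : Set (ℝ × ℝ)) := by
      intro n
      have hpos : ‖gseq (σ n)‖ ≠ 0 := norm_ne_zero_iff.mpr (hgne (σ n))
      have heq : sc n • e (σ n) = k n • gseq (σ n) := by
        rw [hsc, he, smul_smul, mul_assoc, mul_inv_cancel₀ hpos, mul_one]
        exact Int.cast_smul_eq_zsmul ℝ (k n) (gseq (σ n))
      rw [heq]
      exact SetLike.mem_coe.mpr (zsmul_mem (hLC _ (hgL (σ n))) (k n))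
    exact hCclosed.mem_of_tendsto hsmulto (Filter.Eventually.of_forall hmem)
  -- Step 3: case analysis on the direction w
  obtain ⟨w1, w2⟩ := w
  by_cases hw1 : w1 = 0
  · -- vertical line
    apply vert_dense
    intro t
    have hw2 : w2 ≠ 0 := by
      intro hw2
      rw [hw1, hw2] at hwnorm
      norm_num [Prod.norm_def] at hwnorm
    have := hline (t / w2)
    have heq : (t / w2) • ((w1, w2) : ℝ × ℝ) = ((0:ℝ), t) := by
      rw [Prod.smul_mk, Prod.ext_iff]
      constructor
      · simp [hw1]
      · simp [div_mul_cancel₀ t hw2]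
    rwa [heq] at this
  by_cases hw2 : w2 = 0
  · -- horizontal line
    apply horiz_dense
    intro t
    have := hline (t / w1)
    have heq : (t / w1) • ((w1, w2) : ℝ × ℝ) = (t, (0:ℝ)) := by
      rw [Prod.smul_mk, Prod.ext_iff]
      constructor
      · simp [div_mul_cancel₀ t hw1]
      · simp [hw2]
    rwa [heq] at this
  by_cases hrat : ∃ p q' : ℤ, q' ≠ 0 ∧ (w2 / w1 : ℝ) = (p:ℝ) / (q':ℝ)
  · -- rational slope
    obtain ⟨p, q', hq', hpq⟩ := hrat
    have hq'R : ((q':ℤ):ℝ) ≠ 0 := Int.cast_ne_zero.mpr hq'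
    have hp : p ≠ 0 := by
      intro hp0
      rw [hp0] at hpq
      simp at hpq
      exact hw2 (hpq.resolve_right hw1)
    have hpR : ((p:ℤ):ℝ) ≠ 0 := Int.cast_ne_zero.mpr hp
    -- the line in direction (q', p)
    have line2 : ∀ t : ℝ, t • (((q':ℤ):ℝ), ((p:ℤ):ℝ)) ∈ C := by
      intro t
      have := hline (t * q' / w1)
      have heq : (t * q' / w1) • ((w1, w2) : ℝ × ℝ) = (t * q', t * p) := by
        rw [Prod.smul_mk, Prod.ext_iff]
        constructor
        · simp [div_mul_cancel₀ _ hw1]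
        · have hw2eq : w2 = (p:ℝ) / q' * w1 := by
            field_simp at hpq
            field_simp
            linarith [hpq]
          rw [hw2eq]
          simp only [smul_eq_mul]
          field_simp
      rw [heq] at this
      have heq2 : t • (((q':ℤ):ℝ), ((p:ℤ):ℝ)) = ((t * q' : ℝ), (t * p : ℝ)) := by
        rw [Prod.smul_mk, Prod.ext_iff]
        constructor <;> simp [mul_comm]
      rwa [heq2]
    set ξ : ℝ := (p:ℝ) * x1 - (q':ℝ) * x2 with hξ
    -- the subgroup generated by p, q', ξ is dense in ℝ
    have hRdense : Dense ((AddSubgroup.closure {((p:ℤ):ℝ), ((q':ℤ):ℝ), ξ} :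
        AddSubgroup ℝ) : Set ℝ) := by
      rcases AddSubgroup.dense_or_cyclic
        (AddSubgroup.closure {((p:ℤ):ℝ), ((q':ℤ):ℝ), ξ}) with h | ⟨α, hα⟩
      · exact h
      · exfalso
        have hp' : ((p:ℤ):ℝ) ∈ AddSubgroup.closure ({((p:ℤ):ℝ), ((q':ℤ):ℝ), ξ} : Set ℝ) :=
          AddSubgroup.subset_closure (by simp)
        have hq'' : ((q':ℤ):ℝ) ∈ AddSubgroup.closure ({((p:ℤ):ℝ), ((q':ℤ):ℝ), ξ} : Set ℝ) :=
          AddSubgroup.subset_closure (by simp)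
        have hξ' : ξ ∈ AddSubgroup.closure ({((p:ℤ):ℝ), ((q':ℤ):ℝ), ξ} : Set ℝ) :=
          AddSubgroup.subset_closure (by simp)
        rw [hα, AddSubgroup.mem_closure_singleton] at hp' hq'' hξ'
        obtain ⟨n₁, hn₁⟩ := hp'
        obtain ⟨n₂, hn₂⟩ := hq''
        obtain ⟨n₃, hn₃⟩ := hξ'
        rw [zsmul_eq_mul] at hn₁ hn₂ hn₃
        have hn₂0 : n₂ ≠ 0 := by
          intro h0
          rw [h0] at hn₂
          norm_num at hn₂
          exact hq'R hn₂.symm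
        have hkey : ((n₂ * p : ℤ) : ℝ) * x1 + ((-(n₂ * q') : ℤ) : ℝ) * x2 +
            ((-(n₃ * q') : ℤ) : ℝ) = 0 := by
          have e1 : (n₂:ℝ) * ξ = (n₂:ℝ) * (n₃:ℝ) * α := by rw [← hn₃]; ring
          have e2 : (n₃:ℝ) * ((q':ℤ):ℝ) = (n₃:ℝ) * (n₂:ℝ) * α := by rw [← hn₂]; ring
          push_cast
          rw [hξ] at e1
          nlinarith [e1, e2]
        have := (hirr _ _ _ hkey).1
        have : n₂ * p = 0 := this
        rcases mul_eq_zero.mp this with h | h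
        · exact hn₂0 h
        · exact hp h
    -- density via approximation
    apply approx_dense
    rintro ⟨a, b⟩ ε hε
    set denom : ℝ := ((p:ℤ):ℝ)^2 + ((q':ℤ):ℝ)^2 with hdenom
    have hdenompos : 0 < denom := by positivity
    set E1 : ℝ := ((p:ℤ):ℝ)/denom with hE1
    set E2 : ℝ := (-((q':ℤ):ℝ))/denom with hE2
    have hE0norm : 0 < ‖((E1, E2) : ℝ × ℝ)‖ := by
      rw [norm_pos_iff]
      intro h0
      rw [Prod.ext_iff] at h0
      exact (div_ne_zero hpR hdenompos.ne') h0.1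
    set ε' : ℝ := ε / ‖((E1, E2) : ℝ × ℝ)‖ with hε'
    have hε'pos : 0 < ε' := div_pos hε hE0norm
    set β : ℝ := ((p:ℤ):ℝ) * a - ((q':ℤ):ℝ) * b with hβ
    obtain ⟨r, hrmem, hrd⟩ := Metric.mem_closure_iff.mp (hRdense β) ε' hε'pos
    -- representation of r
    set R' : AddSubgroup ℝ :=
      { carrier := {r : ℝ | ∃ m n k : ℤ,
          r = (m:ℝ) * ((p:ℤ):ℝ) + (n:ℝ) * ((q':ℤ):ℝ) + (k:ℝ) * ξ}
        zero_mem' := ⟨0, 0, 0, by norm_num⟩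
        add_mem' := by
          rintro r s ⟨m, n, k, rfl⟩ ⟨m', n', k', rfl⟩
          exact ⟨m + m', n + n', k + k', by push_cast; ring⟩
        neg_mem' := by
          rintro r ⟨m, n, k, rfl⟩
          exact ⟨-m, -n, -k, by push_cast; ring⟩ } with hR'
    have hRR' : AddSubgroup.closure {((p:ℤ):ℝ), ((q':ℤ):ℝ), ξ} ≤ R' := by
      rw [AddSubgroup.closure_le]
      intro z hz
      simp only [Set.mem_insert_iff, Set.mem_singleton_iff] at hz
      rcases hz with rfl | rfl | rfl
      · exact ⟨1, 0, 0, by push_cast; ring⟩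
      · exact ⟨0, 1, 0, by push_cast; ring⟩
      · exact ⟨0, 0, 1, by push_cast; ring⟩
    obtain ⟨m, n, k, rfl⟩ := hRR' (SetLike.mem_coe.mp hrmem)
    set r : ℝ := (m:ℝ) * ((p:ℤ):ℝ) + (n:ℝ) * ((q':ℤ):ℝ) + (k:ℝ) * ξ with hrdef
    set G1 : ℝ := ((m:ℤ):ℝ) + (k:ℝ) * x1 with hG1
    set G2 : ℝ := ((-n:ℤ):ℝ) + (k:ℝ) * x2 with hG2
    have hG : ((G1, G2) : ℝ × ℝ) ∈ C := by
      have := hLC _ (mem_Lgrp x1 x2 m (-n) k)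
      rwa [hG1, hG2]
    set t1 : ℝ := a - G1 - (β - r) * E1 with ht1
    set t2 : ℝ := b - G2 - (β - r) * E2 with ht2
    have h1 : ((p:ℤ):ℝ) * E1 - ((q':ℤ):ℝ) * E2 = 1 := by
      rw [hE1, hE2, hdenom]
      field_simp
      ring
    have hr_eq : ((p:ℤ):ℝ) * G1 - ((q':ℤ):ℝ) * G2 = r := by
      rw [hG1, hG2, hrdef, hξ]
      push_cast
      ring
    have hkey : ((p:ℤ):ℝ) * t1 = ((q':ℤ):ℝ) * t2 := by
      have hexp : ((p:ℤ):ℝ) * t1 - ((q':ℤ):ℝ) * t2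
          = (β - (((p:ℤ):ℝ) * G1 - ((q':ℤ):ℝ) * G2))
            - (β - r) * (((p:ℤ):ℝ) * E1 - ((q':ℤ):ℝ) * E2) := by
        rw [ht1, ht2, hβ]; ring
      rw [h1, hr_eq] at hexp
      have : ((p:ℤ):ℝ) * t1 - ((q':ℤ):ℝ) * t2 = 0 := by rw [hexp]; ring
      linarith
    have hz0C : ((t1, t2) : ℝ × ℝ) ∈ C := by
      have hl := line2 (t1 / ((q':ℤ):ℝ))
      have heq : (t1 / ((q':ℤ):ℝ)) • ((((q':ℤ):ℝ), ((p:ℤ):ℝ)) : ℝ × ℝ) = (t1, t2) := by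
        rw [Prod.smul_mk, Prod.mk.injEq]
        constructor
        · rw [smul_eq_mul, div_mul_cancel₀ _ hq'R]
        · rw [smul_eq_mul]
          field_simp
          linarith [hkey]
      rwa [heq] at hl
    refine ⟨(G1, G2) + (t1, t2), add_mem hG hz0C, ?_⟩
    have hdiff : ((a, b) : ℝ × ℝ) - ((G1, G2) + (t1, t2)) = (β - r) • ((E1, E2) : ℝ × ℝ) := by
      rw [Prod.mk_add_mk, Prod.mk_sub_mk, Prod.smul_mk, Prod.mk.injEq]
      constructor <;> (rw [smul_eq_mul]; ring)
    have hd : dist ((a, b) : ℝ × ℝ) ((G1, G2) + (t1, t2)) = |β - r| * ‖((E1, E2) : ℝ × ℝ)‖ := by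
      rw [dist_eq_norm, hdiff, norm_smul, Real.norm_eq_abs]
    rw [hd]
    have habs : |β - r| < ε' := by
      rw [← Real.dist_eq]; exact hrd
    calc |β - r| * ‖((E1, E2) : ℝ × ℝ)‖ < ε' * ‖((E1, E2) : ℝ × ℝ)‖ :=
          mul_lt_mul_of_pos_right habs hE0norm
      _ = ε := by rw [hε']; field_simp
  · -- irrational slope
    apply vert_dense
    have hKσ : ((0:ℝ), w2 / w1) ∈ C := by
      have h1 := hline (1 / w1)
      have heq : (1 / w1) • ((w1, w2) : ℝ × ℝ) = ((1:ℝ), w2 / w1) := by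
        rw [Prod.smul_mk, Prod.mk.injEq]
        constructor
        · rw [smul_eq_mul, one_div, inv_mul_cancel₀ hw1]
        · rw [smul_eq_mul, one_div_mul_eq_div]
      rw [heq] at h1
      have h2 : (((1:ℤ):ℝ) + (0:ℤ) * x1, ((0:ℤ):ℝ) + (0:ℤ) * x2) ∈ C :=
        hLC _ (mem_Lgrp x1 x2 1 0 0)
      have h3 : (((1:ℝ), (0:ℝ)) : ℝ × ℝ) ∈ C := by
        convert h2 using 2 <;> simp
      have := sub_mem h1 h3
      have heq2 : (((1:ℝ), w2 / w1) : ℝ × ℝ) - ((1:ℝ), (0:ℝ)) = ((0:ℝ), w2 / w1) := by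
        rw [Prod.mk_sub_mk, Prod.ext_iff]
        constructor <;> simp
      rwa [heq2] at this
    have hK1 : ((0:ℝ), (1:ℝ)) ∈ C := by
      have h2 : (((0:ℤ):ℝ) + (0:ℤ) * x1, ((1:ℤ):ℝ) + (0:ℤ) * x2) ∈ C :=
        hLC _ (mem_Lgrp x1 x2 0 1 0)
      convert h2 using 2 <;> simp
    set K : AddSubgroup ℝ := C.comap (AddMonoidHom.inr ℝ ℝ) with hKdef
    have hKmem : ∀ s : ℝ, s ∈ K ↔ ((0:ℝ), s) ∈ C := by
      intro s
      rw [hKdef, AddSubgroup.mem_comap]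
      rfl
    have hKclosed : IsClosed (K : Set ℝ) := by
      have : (K : Set ℝ) = (fun s : ℝ => ((0:ℝ), s)) ⁻¹' (C : Set (ℝ × ℝ)) := by
        ext s
        simp [hKmem s]
      rw [this]
      exact hCclosed.preimage (Continuous.prodMk_right 0)
    have hsub : ((AddSubgroup.closure {1, w2 / w1} : AddSubgroup ℝ) : Set ℝ) ⊆ (K : Set ℝ) := by
      apply SetLike.coe_subset_coe.mpr
      rw [AddSubgroup.closure_le]
      rintro z (h | h)
      · rw [h]; exact SetLike.mem_coe.mpr ((hKmem 1).mpr hK1)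
      · rw [mem_singleton_iff.mp h]; exact SetLike.mem_coe.mpr ((hKmem _).mpr hKσ)
    have hdense : Dense ((AddSubgroup.closure {1, w2/w1} : AddSubgroup ℝ) : Set ℝ) := by
      apply dense1D
      intro n m h
      by_contra hn0
      apply hrat
      refine ⟨-m, n, hn0, ?_⟩
      have hnR : (n:ℝ) ≠ 0 := Int.cast_ne_zero.mpr hn0
      push_cast
      rw [eq_div_iff hnR]
      linarith [h]
    intro t
    rw [← hKmem t]
    have : t ∈ closure ((AddSubgroup.closure {1, w2/w1} : AddSubgroup ℝ) : Set ℝ) := hdense t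
    have hsub2 := closure_mono hsub
    rw [hKclosed.closure_eq] at hsub2
    exact hsub2 this

/-- Kronecker's theorem on the 2-torus. -/
lemma kronecker_torus (x1 x2 : ℝ)
    (hirr : ∀ a b c : ℤ, (a : ℝ) * x1 + (b : ℝ) * x2 + (c : ℝ) = 0 → a = 0 ∧ b = 0 ∧ c = 0) :
    DenseRange (fun n : ℤ => n • ((((x1 : ℝ) : 𝕋), ((x2 : ℝ) : 𝕋)) : 𝕋 × 𝕋)) := by
  classical
  set X : 𝕋 × 𝕋 := (((x1 : ℝ) : 𝕋), ((x2 : ℝ) : 𝕋)) with hX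
  set Φ : ℝ × ℝ →+ 𝕋 × 𝕋 :=
    (QuotientAddGroup.mk' (AddSubgroup.zmultiples (1:ℝ))).prodMap
      (QuotientAddGroup.mk' (AddSubgroup.zmultiples (1:ℝ))) with hΦ
  have hΦeq : ∀ z : ℝ × ℝ, Φ z = (((z.1 : ℝ) : 𝕋), ((z.2 : ℝ) : 𝕋)) := fun z => rfl
  have hΦcont : Continuous Φ := by
    apply Continuous.prodMap <;> exact AddCircle.continuous_mk' 1
  have hΦsurj : Function.Surjective Φ := by
    apply Function.Surjective.prodMap <;> exact QuotientAddGroup.mk'_surjective _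
  have hmapL : ∀ z ∈ Lgrp x1 x2, Φ z ∈ AddSubgroup.zmultiples X := by
    have hle : Lgrp x1 x2 ≤ (AddSubgroup.zmultiples X).comap Φ := by
      rw [Lgrp, AddSubgroup.closure_le]
      intro z hz
      simp only [Set.mem_insert_iff, Set.mem_singleton_iff] at hz
      rcases hz with rfl | rfl | rfl
      · have h1 : Φ ((1:ℝ), (0:ℝ)) = 0 := by
          rw [hΦeq]
          rw [Prod.ext_iff]
          constructor
          · exact AddCircle.coe_period 1
          · rfl
        rw [SetLike.mem_coe, AddSubgroup.mem_comap, h1]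
        exact zero_mem _
      · have h1 : Φ ((0:ℝ), (1:ℝ)) = 0 := by
          rw [hΦeq]
          rw [Prod.ext_iff]
          constructor
          · rfl
          · exact AddCircle.coe_period 1
        rw [SetLike.mem_coe, AddSubgroup.mem_comap, h1]
        exact zero_mem _
      · rw [SetLike.mem_coe, AddSubgroup.mem_comap]
        exact AddSubgroup.mem_zmultiples X
    exact fun z hz => hle hz
  have hdense2 : Dense (Φ '' ((Lgrp x1 x2 : AddSubgroup (ℝ×ℝ)) : Set (ℝ × ℝ))) := by
    intro y
    rw [mem_closure_iff]
    intro o ho hyo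
    obtain ⟨z, hz⟩ := hΦsurj y
    have hzc : z ∈ closure ((Lgrp x1 x2 : AddSubgroup (ℝ×ℝ)) : Set (ℝ × ℝ)) :=
      dense_Lgrp x1 x2 hirr z
    rw [mem_closure_iff] at hzc
    obtain ⟨w, hw1, hw2⟩ := hzc (Φ ⁻¹' o) (ho.preimage hΦcont)
      (by rw [Set.mem_preimage, hz]; exact hyo)
    exact ⟨Φ w, hw1, Set.mem_image_of_mem Φ hw2⟩
  apply hdense2.mono
  rintro y ⟨z, hzL, rfl⟩
  obtain ⟨k, hk⟩ := AddSubgroup.mem_zmultiples_iff.mp (hmapL z hzL)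
  exact ⟨k, hk⟩

instance T2vol_leftinv : (volume : Measure (𝕋 × 𝕋)).IsAddLeftInvariant := by
  rw [Measure.volume_eq_prod]; infer_instance

instance T2vol_prob : IsProbabilityMeasure (volume : Measure (𝕋 × 𝕋)) := by
  constructor
  rw [Measure.volume_eq_prod, ← Set.univ_prod_univ, Measure.prod_prod]
  simp [AddCircle.measure_univ]

theorem torus_full (i j c Λ : ℝ) (hi : 0 < i) (hj : 0 < j) (hij : i + j = 1) (hc : 0 < c)
    (hΛi : (4:ℝ) ^ (1/i) ≤ Λ) (hΛj : (4:ℝ) ^ (1/j) ≤ Λ)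
    (x1 x2 : ℝ)
    (hirr : ∀ a b c' : ℤ, (a : ℝ) * x1 + (b : ℝ) * x2 + (c' : ℝ) = 0 → a = 0 ∧ b = 0 ∧ c' = 0)
    (hbad : ∀ m : ℕ, 1 ≤ m →
      (c/m)^i < ‖(((m:ℝ) * x1 : ℝ) : 𝕋)‖ ∨ (c/m)^j < ‖(((m:ℝ) * x2 : ℝ) : 𝕋)‖)
    (φ : ℕ → ℝ) (hφpos : ∀ q, 0 < φ q) (hφanti : Antitone φ) (hφdiv : ¬ Summable φ)
    (hρ : ∀ q, φ q ^ i ≤ 1/2) (hτ : ∀ q, φ q ^ j ≤ 1/2) :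
    volume (⋂ M : ℕ, ⋃ q : ℕ, ⋃ (_ : M ≤ q),
      (Metric.closedBall ((((q:ℝ) * x1 : ℝ)) : 𝕋) (φ q ^ i) ×ˢ
       Metric.closedBall ((((q:ℝ) * x2 : ℝ)) : 𝕋) (φ q ^ j))) = 1 := by
  classical
  have hΛpos : 0 < Λ := lt_of_lt_of_le (Real.rpow_pos_of_pos (by norm_num) _) hΛi
  set A : ℕ → Set (𝕋 × 𝕋) := fun q =>
    (Metric.closedBall ((((q:ℝ) * x1 : ℝ)) : 𝕋) (φ q ^ i) ×ˢ
     Metric.closedBall ((((q:ℝ) * x2 : ℝ)) : 𝕋) (φ q ^ j)) with hA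
  have hAmeas : ∀ q, MeasurableSet (A q) :=
    fun q => measurableSet_closedBall.prod measurableSet_closedBall
  have hρpos : ∀ q, 0 < φ q ^ i := fun q => Real.rpow_pos_of_pos (hφpos q) i
  have hτpos : ∀ q, 0 < φ q ^ j := fun q => Real.rpow_pos_of_pos (hφpos q) j
  have hρanti : ∀ q r : ℕ, q ≤ r → φ r ^ i ≤ φ q ^ i :=
    fun q r h => Real.rpow_le_rpow (hφpos r).le (hφanti h) hi.le
  have hτanti : ∀ q r : ℕ, q ≤ r → φ r ^ j ≤ φ q ^ j :=
    fun q r h => Real.rpow_le_rpow (hφpos r).le (hφanti h) hj.le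
  -- measure of A q
  have hμA : ∀ q, volume (A q) = ENNReal.ofReal (4 * φ q) := by
    intro q
    rw [hA]
    simp only
    rw [Measure.volume_eq_prod, Measure.prod_prod, AddCircle.volume_closedBall,
      AddCircle.volume_closedBall]
    rw [min_eq_right (by linarith [hρ q]), min_eq_right (by linarith [hτ q])]
    rw [← ENNReal.ofReal_mul (by nlinarith [hρpos q] : (0:ℝ) ≤ 2 * φ q ^ i)]
    congr 1
    have : φ q ^ i * φ q ^ j = φ q := by
      rw [← Real.rpow_add (hφpos q), hij, Real.rpow_one]
    nlinarith [this]
  -- distance between centers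
  have hcdist : ∀ (y : ℝ) (r r' : ℕ), r ≤ r' →
      dist ((((r:ℝ) * y : ℝ)) : 𝕋) ((((r':ℝ) * y : ℝ)) : 𝕋)
        = ‖((((r' - r : ℕ) : ℝ) * y : ℝ) : 𝕋)‖ := by
    intro y r r' h
    have hcast : ((r' - r : ℕ) : ℝ) * y = (r':ℝ) * y - (r:ℝ) * y := by
      rw [Nat.cast_sub h]; ring
    rw [dist_eq_norm, norm_sub_rev, hcast, AddCircle.coe_sub]
  -- if two sets both meet A q, their indices are far apart
  have hcenter : ∀ q r : ℕ, q ≤ r → (A q ∩ A r).Nonempty →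
      dist ((((q:ℝ) * x1 : ℝ)) : 𝕋) ((((r:ℝ) * x1 : ℝ)) : 𝕋) ≤ 2 * φ q ^ i ∧
      dist ((((q:ℝ) * x2 : ℝ)) : 𝕋) ((((r:ℝ) * x2 : ℝ)) : 𝕋) ≤ 2 * φ q ^ j := by
    rintro q r hqr ⟨γ, hγq, hγr⟩
    rw [hA] at hγq hγr
    obtain ⟨h1q, h2q⟩ := hγq
    obtain ⟨h1r, h2r⟩ := hγr
    rw [Metric.mem_closedBall] at h1q h2q h1r h2r
    constructor
    · calc dist ((((q:ℝ) * x1 : ℝ)) : 𝕋) ((((r:ℝ) * x1 : ℝ)) : 𝕋)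
          ≤ dist ((((q:ℝ) * x1 : ℝ)) : 𝕋) γ.1 + dist γ.1 ((((r:ℝ) * x1 : ℝ)) : 𝕋) :=
            dist_triangle _ _ _
        _ ≤ φ q ^ i + φ r ^ i := by
            rw [dist_comm ((((q:ℝ) * x1 : ℝ)) : 𝕋) γ.1]
            exact add_le_add h1q h1r
        _ ≤ 2 * φ q ^ i := by linarith [hρanti q r hqr]
    · calc dist ((((q:ℝ) * x2 : ℝ)) : 𝕋) ((((r:ℝ) * x2 : ℝ)) : 𝕋)
          ≤ dist ((((q:ℝ) * x2 : ℝ)) : 𝕋) γ.2 + dist γ.2 ((((r:ℝ) * x2 : ℝ)) : 𝕋) :=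
            dist_triangle _ _ _
        _ ≤ φ q ^ j + φ r ^ j := by
            rw [dist_comm ((((q:ℝ) * x2 : ℝ)) : 𝕋) γ.2]
            exact add_le_add h2q h2r
        _ ≤ 2 * φ q ^ j := by linarith [hτanti q r hqr]
  -- separation from badness
  have hsepkey : ∀ q m : ℕ, 1 ≤ m →
      ‖(((m:ℝ) * x1 : ℝ) : 𝕋)‖ ≤ 4 * φ q ^ i → ‖(((m:ℝ) * x2 : ℝ) : 𝕋)‖ ≤ 4 * φ q ^ j →
      c / (Λ * φ q) < (m:ℝ) := by
    intro q m hm h1 h2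
    have hmpos : (0:ℝ) < m := by exact_mod_cast hm
    have hΛφpos : 0 < Λ * φ q := mul_pos hΛpos (hφpos q)
    have hkey : c / (m:ℝ) < Λ * φ q := by
      rcases hbad m hm with h | h
      · have h4 : (4:ℝ) * φ q ^ i ≤ (Λ * φ q) ^ i := by
          rw [Real.mul_rpow hΛpos.le (hφpos q).le]
          have h40 : (4:ℝ) = ((4:ℝ) ^ (1/i)) ^ i := by
            rw [← Real.rpow_mul (by norm_num : (0:ℝ) ≤ 4)]
            rw [one_div, inv_mul_cancel₀ hi.ne', Real.rpow_one]
          have : ((4:ℝ) ^ (1/i)) ^ i ≤ Λ ^ i :=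
            Real.rpow_le_rpow (Real.rpow_nonneg (by norm_num) _) hΛi hi.le
          have h41 : (4:ℝ) ≤ Λ ^ i := le_trans (le_of_eq h40) this
          have := mul_le_mul_of_nonneg_right h41 (hρpos q).le
          linarith
        have hlt : (c / (m:ℝ)) ^ i < (Λ * φ q) ^ i := by
          calc (c / (m:ℝ)) ^ i < ‖(((m:ℝ) * x1 : ℝ) : 𝕋)‖ := h
            _ ≤ 4 * φ q ^ i := h1
            _ ≤ (Λ * φ q) ^ i := h4
        by_contra hge
        push_neg at hge
        have := Real.rpow_le_rpow hΛφpos.le hge hi.le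
        linarith
      · have h4 : (4:ℝ) * φ q ^ j ≤ (Λ * φ q) ^ j := by
          rw [Real.mul_rpow hΛpos.le (hφpos q).le]
          have h40 : (4:ℝ) = ((4:ℝ) ^ (1/j)) ^ j := by
            rw [← Real.rpow_mul (by norm_num : (0:ℝ) ≤ 4)]
            rw [one_div, inv_mul_cancel₀ hj.ne', Real.rpow_one]
          have : ((4:ℝ) ^ (1/j)) ^ j ≤ Λ ^ j :=
            Real.rpow_le_rpow (Real.rpow_nonneg (by norm_num) _) hΛj hj.le
          have h41 : (4:ℝ) ≤ Λ ^ j := le_trans (le_of_eq h40) this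
          have := mul_le_mul_of_nonneg_right h41 (hτpos q).le
          linarith
        have hlt : (c / (m:ℝ)) ^ j < (Λ * φ q) ^ j := by
          calc (c / (m:ℝ)) ^ j < ‖(((m:ℝ) * x2 : ℝ) : 𝕋)‖ := h
            _ ≤ 4 * φ q ^ j := h2
            _ ≤ (Λ * φ q) ^ j := h4
        by_contra hge
        push_neg at hge
        have := Real.rpow_le_rpow hΛφpos.le hge hj.le
        linarith
    rw [div_lt_iff₀ hmpos] at hkey
    rw [div_lt_iff₀ hΛφpos]
    linarith [hkey]
  -- weights
  set g : ℕ → ℝ := fun s' => 4 * φ s' with hg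
  have hganti : Antitone g := fun a b h => by
    have := hφanti h; simp only [hg]; linarith
  have hg0 : ∀ n, 0 ≤ g n := fun n => by
    have := (hφpos n).le; simp only [hg]; linarith
  -- correlation bound per q
  have hcorr : ∀ M N q : ℕ, M ≤ q →
      ∑ r ∈ (Finset.Icc M N).filter (fun r => q < r), volume (A q ∩ A r)
        ≤ ENNReal.ofReal ((Λ / (4*c)) * g q * ∑ s' ∈ Finset.Icc M N, g s') := by
    intro M N q hMq
    set D : ℝ := c / (Λ * φ q) with hD
    have hDpos : 0 < D := div_pos hc (mul_pos hΛpos (hφpos q))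
    set S : Finset ℕ := (Finset.Icc M N).filter
      (fun r => q < r ∧ (A q ∩ A r).Nonempty) with hS
    have hSsub : S ⊆ Finset.Ioc q N := by
      intro r hr
      rw [hS, Finset.mem_filter, Finset.mem_Icc] at hr
      exact Finset.mem_Ioc.mpr ⟨hr.2.1, hr.1.2⟩
    have he1 : ∑ r ∈ (Finset.Icc M N).filter (fun r => q < r), volume (A q ∩ A r)
        = ∑ r ∈ S, volume (A q ∩ A r) := by
      symm
      apply Finset.sum_subset
      · intro r hr
        rw [hS, Finset.mem_filter] at hr
        rw [Finset.mem_filter]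
        exact ⟨hr.1, hr.2.1⟩
      · intro r hr hnot
        rw [Finset.mem_filter] at hr
        have hempty : ¬ (A q ∩ A r).Nonempty := by
          intro hne
          exact hnot (by rw [hS, Finset.mem_filter]; exact ⟨hr.1, hr.2, hne⟩)
        rw [Set.not_nonempty_iff_eq_empty] at hempty
        rw [hempty, measure_empty]
    have hgap1 : ∀ r ∈ S, D < (r:ℝ) - q := by
      intro r hr
      rw [hS, Finset.mem_filter] at hr
      obtain ⟨hmem, hqr, hne⟩ := hr
      have h1 := hcenter q r hqr.le hne
      have hb1 : ‖((((r - q : ℕ) : ℝ) * x1 : ℝ) : 𝕋)‖ ≤ 4 * φ q ^ i := by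
        rw [← hcdist x1 q r hqr.le]
        nlinarith [h1.1, hρpos q]
      have hb2 : ‖((((r - q : ℕ) : ℝ) * x2 : ℝ) : 𝕋)‖ ≤ 4 * φ q ^ j := by
        rw [← hcdist x2 q r hqr.le]
        nlinarith [h1.2, hτpos q]
      have hkey := hsepkey q (r - q) (by omega) hb1 hb2
      rw [Nat.cast_sub hqr.le] at hkey
      rw [hD]
      exact hkey
    have hgap2 : ∀ r ∈ S, ∀ r' ∈ S, r < r' → D < (r':ℝ) - r := by
      intro r hr r' hr' hlt
      rw [hS, Finset.mem_filter] at hr hr'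
      obtain ⟨hmem, hqr, hne⟩ := hr
      obtain ⟨hmem', hqr', hne'⟩ := hr'
      have h1 := hcenter q r hqr.le hne
      have h1' := hcenter q r' hqr'.le hne'
      have hb1 : ‖((((r' - r : ℕ) : ℝ) * x1 : ℝ) : 𝕋)‖ ≤ 4 * φ q ^ i := by
        rw [← hcdist x1 r r' hlt.le]
        have htri := dist_triangle ((((r:ℝ) * x1 : ℝ)) : 𝕋) ((((q:ℝ) * x1 : ℝ)) : 𝕋)
          ((((r':ℝ) * x1 : ℝ)) : 𝕋)
        rw [dist_comm ((((r:ℝ) * x1 : ℝ)) : 𝕋) ((((q:ℝ) * x1 : ℝ)) : 𝕋)] at htri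
        nlinarith [h1.1, h1'.1]
      have hb2 : ‖((((r' - r : ℕ) : ℝ) * x2 : ℝ) : 𝕋)‖ ≤ 4 * φ q ^ j := by
        rw [← hcdist x2 r r' hlt.le]
        have htri := dist_triangle ((((r:ℝ) * x2 : ℝ)) : 𝕋) ((((q:ℝ) * x2 : ℝ)) : 𝕋)
          ((((r':ℝ) * x2 : ℝ)) : 𝕋)
        rw [dist_comm ((((r:ℝ) * x2 : ℝ)) : 𝕋) ((((q:ℝ) * x2 : ℝ)) : 𝕋)] at htri
        nlinarith [h1.2, h1'.2]
      have hkey := hsepkey q (r' - r) (by omega) hb1 hb2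
      rw [Nat.cast_sub hlt.le] at hkey
      rw [hD]
      exact hkey
    have hgapsum := gap_sum g hganti hg0 D S.card S q N rfl hSsub hgap1 hgap2
    have he2 : ∑ r ∈ S, volume (A q ∩ A r) ≤ ∑ r ∈ S, volume (A r) :=
      Finset.sum_le_sum fun r _ => measure_mono Set.inter_subset_right
    have he3 : ∑ r ∈ S, volume (A r) = ENNReal.ofReal (∑ r ∈ S, g r) := by
      rw [ENNReal.ofReal_sum_of_nonneg (fun r _ => hg0 r)]
      exact Finset.sum_congr rfl fun r _ => by rw [hμA r]
    have hIoc_sub : Finset.Ioc q N ⊆ Finset.Icc M N := by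
      intro s' hs'
      rw [Finset.mem_Ioc] at hs'
      rw [Finset.mem_Icc]
      omega
    have h5 : ∑ s' ∈ Finset.Ioc q N, g s' ≤ ∑ s' ∈ Finset.Icc M N, g s' :=
      Finset.sum_le_sum_of_subset_of_nonneg hIoc_sub (fun s' _ _ => hg0 s')
    have h6 : D * ∑ r ∈ S, g r ≤ ∑ s' ∈ Finset.Icc M N, g s' := le_trans hgapsum h5
    have hx : (Λ * φ q / c) * D = 1 := by
      rw [hD]; field_simp
      exact div_self (hφpos q).ne'
    have he4 : ∑ r ∈ S, g r ≤ (Λ / (4*c)) * g q * ∑ s' ∈ Finset.Icc M N, g s' := by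
      have h7 : ∑ r ∈ S, g r ≤ (Λ * φ q / c) * ∑ s' ∈ Finset.Icc M N, g s' := by
        calc ∑ r ∈ S, g r = ((Λ * φ q / c) * D) * ∑ r ∈ S, g r := by rw [hx, one_mul]
          _ = (Λ * φ q / c) * (D * ∑ r ∈ S, g r) := by ring
          _ ≤ (Λ * φ q / c) * ∑ s' ∈ Finset.Icc M N, g s' := by
              exact mul_le_mul_of_nonneg_left h6
                (le_of_lt (div_pos (mul_pos hΛpos (hφpos q)) hc))
      calc ∑ r ∈ S, g r ≤ (Λ * φ q / c) * ∑ s' ∈ Finset.Icc M N, g s' := h7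
        _ = (Λ / (4*c)) * g q * ∑ s' ∈ Finset.Icc M N, g s' := by
            simp only [hg]
            field_simp
    rw [he1]
    exact le_trans he2 (le_trans (le_of_eq he3) (ENNReal.ofReal_le_ofReal he4))
  -- double sum bound
  have hdouble : ∀ M N : ℕ,
      ∑ q ∈ Finset.Icc M N, ∑ r ∈ Finset.Icc M N, volume (A q ∩ A r)
      ≤ ENNReal.ofReal (∑ s' ∈ Finset.Icc M N, g s')
        + ENNReal.ofReal (2 * (Λ / (4*c)) * (∑ s' ∈ Finset.Icc M N, g s')^2) := by
    intro M N
    set s := Finset.Icc M N with hsdef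
    set t : ℝ := ∑ s' ∈ s, g s' with ht
    have htnn : 0 ≤ t := Finset.sum_nonneg fun s' _ => hg0 s'
    have hsplit : ∑ q ∈ s, ∑ r ∈ s, volume (A q ∩ A r)
        = (∑ q ∈ s, volume (A q))
          + (∑ q ∈ s, ∑ r ∈ s.filter (fun r => q < r), volume (A q ∩ A r)
            + ∑ q ∈ s, ∑ r ∈ s.filter (fun r => r < q), volume (A q ∩ A r)) := by
      have h1 : ∀ q ∈ s, ∑ r ∈ s, volume (A q ∩ A r)
          = volume (A q) + (∑ r ∈ s.filter (fun r => q < r), volume (A q ∩ A r)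
            + ∑ r ∈ s.filter (fun r => r < q), volume (A q ∩ A r)) := by
        intro q hq
        rw [← Finset.sum_filter_add_sum_filter_not s (fun r => r < q)]
        have h2 : s.filter (fun r => ¬ r < q) = insert q (s.filter (fun r => q < r)) := by
          ext r
          simp only [Finset.mem_filter, Finset.mem_insert, not_lt]
          constructor
          · rintro ⟨hrs, hqr⟩
            rcases Nat.eq_or_lt_of_le hqr with h | h
            · left; omega
            · right; exact ⟨hrs, h⟩
          · rintro (rfl | ⟨hrs, hqr⟩)
            · exact ⟨hq, le_rfl⟩
            · exact ⟨hrs, hqr.le⟩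
        rw [h2, Finset.sum_insert (by simp)]
        rw [Set.inter_self]
        ring
      rw [Finset.sum_congr rfl h1, Finset.sum_add_distrib, Finset.sum_add_distrib]
    have hswap : ∑ q ∈ s, ∑ r ∈ s.filter (fun r => r < q), volume (A q ∩ A r)
        = ∑ q ∈ s, ∑ r ∈ s.filter (fun r => q < r), volume (A q ∩ A r) := by
      rw [Finset.sum_comm' (t' := s) (s' := fun r => s.filter (fun q' => r < q'))
        (fun q r => ?_)]
      · apply Finset.sum_congr rfl
        intro q _
        apply Finset.sum_congr rfl
        intro r _
        rw [Set.inter_comm]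
      · constructor
        · rintro ⟨hq, hr⟩
          rw [Finset.mem_filter] at hr
          exact ⟨by rw [Finset.mem_filter]; exact ⟨hq, hr.2⟩, hr.1⟩
        · rintro ⟨hq, hr⟩
          rw [Finset.mem_filter] at hq
          exact ⟨hq.1, by rw [Finset.mem_filter]; exact ⟨hr, hq.2⟩⟩
    have hoff : ∑ q ∈ s, ∑ r ∈ s.filter (fun r => q < r), volume (A q ∩ A r)
        ≤ ENNReal.ofReal ((Λ/(4*c)) * t * t) := by
      calc ∑ q ∈ s, ∑ r ∈ s.filter (fun r => q < r), volume (A q ∩ A r)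
          ≤ ∑ q ∈ s, ENNReal.ofReal ((Λ/(4*c)) * g q * t) :=
            Finset.sum_le_sum fun q hq => hcorr M N q (Finset.mem_Icc.mp hq).1
        _ = ENNReal.ofReal (∑ q ∈ s, (Λ/(4*c)) * g q * t) := by
            rw [ENNReal.ofReal_sum_of_nonneg]
            intro q _
            have h1 : 0 ≤ Λ/(4*c) := by positivity
            have h2 := hg0 q
            positivity
        _ = ENNReal.ofReal ((Λ/(4*c)) * t * t) := by
            congr 1
            rw [← Finset.sum_mul, ← Finset.mul_sum, ← ht]
    have hdiag : ∑ q ∈ s, volume (A q) = ENNReal.ofReal t := by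
      rw [ht, ENNReal.ofReal_sum_of_nonneg (fun r _ => hg0 r)]
      exact Finset.sum_congr rfl fun r _ => by rw [hμA r]
    calc ∑ q ∈ s, ∑ r ∈ s, volume (A q ∩ A r)
        = (∑ q ∈ s, volume (A q))
          + (∑ q ∈ s, ∑ r ∈ s.filter (fun r => q < r), volume (A q ∩ A r)
            + ∑ q ∈ s, ∑ r ∈ s.filter (fun r => r < q), volume (A q ∩ A r)) := hsplit
      _ ≤ ENNReal.ofReal t + (ENNReal.ofReal ((Λ/(4*c)) * t * t)
            + ENNReal.ofReal ((Λ/(4*c)) * t * t)) := by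
          rw [hdiag, hswap]
          exact add_le_add_right (add_le_add hoff hoff) _
      _ = ENNReal.ofReal t + ENNReal.ofReal (2 * (Λ / (4*c)) * t^2) := by
          rw [← ENNReal.ofReal_add (by positivity) (by positivity)]
          congr 1
          ring
  -- tail bound
  set β : ℝ≥0∞ := ENNReal.ofReal (2 * (Λ / (4*c))) with hβ
  have hβfin : β ≠ ∞ := ENNReal.ofReal_ne_top
  have h1βne : (1 : ℝ≥0∞) + β ≠ 0 :=
    (lt_of_lt_of_le zero_lt_one le_self_add).ne' 
  have h1βfin : (1 : ℝ≥0∞) + β ≠ ∞ := by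
    rw [ENNReal.add_ne_top]
    exact ⟨ENNReal.one_ne_top, hβfin⟩
  set δ : ℝ≥0∞ := ((1 : ℝ≥0∞) + β)⁻¹ with hδ
  have hδpos : 0 < δ := ENNReal.inv_pos.mpr h1βfin
  have hns : ¬ Summable g := by
    intro hs
    apply hφdiv
    have h4 := hs.mul_left (4⁻¹ : ℝ)
    have : (fun s' => (4⁻¹ : ℝ) * g s') = φ := by
      funext s'
      simp only [hg]
      ring
    rwa [this] at h4
  have htail : ∀ M : ℕ, δ ≤ volume (⋃ q : ℕ, ⋃ (_ : M ≤ q), A q) := by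
    intro M
    obtain ⟨N, hN⟩ : ∃ N : ℕ, 1 ≤ ∑ s' ∈ Finset.Icc M N, g s' := by
      have htend := (not_summable_iff_tendsto_nat_atTop_of_nonneg hg0).mp hns
      obtain ⟨n, hn1, hn2⟩ :=
        ((htend.eventually_ge_atTop (∑ s' ∈ Finset.range M, g s' + 1)).and
          (eventually_ge_atTop (M+1))).exists
      refine ⟨n - 1, ?_⟩
      have hIcc : Finset.Icc M (n-1) = Finset.Ico M n := by
        rw [← Finset.Ico_add_one_right_eq_Icc]
        congr 1
        omega
      rw [hIcc, Finset.sum_Ico_eq_sub _ (by omega : M ≤ n)]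
      linarith
    set t : ℝ := ∑ s' ∈ Finset.Icc M N, g s' with ht
    have htnn : 0 ≤ t := Finset.sum_nonneg fun s' _ => hg0 s'
    set T : ℝ≥0∞ := ENNReal.ofReal t with hT
    have hT1 : (1 : ℝ≥0∞) ≤ T := by
      rw [hT, ← ENNReal.ofReal_one]
      exact ENNReal.ofReal_le_ofReal hN
    have hTfin : T ≠ ∞ := ENNReal.ofReal_ne_top
    have hTne : T ≠ 0 := by
      intro h
      rw [h] at hT1
      simp at hT1
    have hdiag : ∑ q ∈ Finset.Icc M N, volume (A q) = T := by
      rw [hT, ht, ENNReal.ofReal_sum_of_nonneg (fun r _ => hg0 r)]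
      exact Finset.sum_congr rfl fun r _ => by rw [hμA r]
    have hsm := second_moment volume (Finset.Icc M N) A hAmeas
    rw [hdiag] at hsm
    have hβT : β * T^2 = ENNReal.ofReal (2 * (Λ/(4*c)) * t^2) := by
      rw [hβ, hT, sq, ← ENNReal.ofReal_mul htnn,
        ← ENNReal.ofReal_mul (by positivity : (0:ℝ) ≤ 2*(Λ/(4*c)))]
      congr 1
      ring
    have h2 : ∑ q ∈ Finset.Icc M N, ∑ r ∈ Finset.Icc M N, volume (A q ∩ A r)
        ≤ T + β * T^2 := by
      rw [hβT]
      exact hdouble M N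
    have hTsq : T ≤ T^2 := by
      rw [sq]
      exact le_mul_of_one_le_left zero_le hT1
    have h3 : T^2 ≤ volume (⋃ q ∈ Finset.Icc M N, A q) * (((1:ℝ≥0∞)+β) * T^2) := by
      calc T^2 ≤ volume (⋃ q ∈ Finset.Icc M N, A q)
            * ∑ q ∈ Finset.Icc M N, ∑ r ∈ Finset.Icc M N, volume (A q ∩ A r) := hsm
        _ ≤ volume (⋃ q ∈ Finset.Icc M N, A q) * (T + β * T^2) := mul_le_mul_right h2 _
        _ ≤ volume (⋃ q ∈ Finset.Icc M N, A q) * (((1:ℝ≥0∞)+β) * T^2) := by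
            apply mul_le_mul_right
            calc T + β*T^2 ≤ T^2 + β*T^2 := add_le_add_left hTsq _
              _ = ((1:ℝ≥0∞)+β) * T^2 := by ring
    have hT2ne : T^2 ≠ 0 := pow_ne_zero 2 hTne
    have hT2fin : T^2 ≠ ∞ := ENNReal.pow_ne_top hTfin
    have h4 : (1:ℝ≥0∞) ≤ volume (⋃ q ∈ Finset.Icc M N, A q) * ((1:ℝ≥0∞)+β) := by
      have h3' : (1:ℝ≥0∞) * T^2
          ≤ (volume (⋃ q ∈ Finset.Icc M N, A q) * ((1:ℝ≥0∞)+β)) * T^2 := by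
        rw [one_mul, mul_assoc]
        exact h3
      exact (ENNReal.mul_le_mul_iff_left hT2ne hT2fin).mp h3'
    have h5 : δ ≤ volume (⋃ q ∈ Finset.Icc M N, A q) := by
      rw [hδ]
      calc ((1:ℝ≥0∞)+β)⁻¹ = ((1:ℝ≥0∞)+β)⁻¹ * 1 := (mul_one _).symm
        _ ≤ ((1:ℝ≥0∞)+β)⁻¹ * (volume (⋃ q ∈ Finset.Icc M N, A q) * ((1:ℝ≥0∞)+β)) :=
            mul_le_mul_right h4 _
        _ = volume (⋃ q ∈ Finset.Icc M N, A q) * (((1:ℝ≥0∞)+β)⁻¹ * ((1:ℝ≥0∞)+β)) := by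
            ring
        _ = volume (⋃ q ∈ Finset.Icc M N, A q) := by
            rw [ENNReal.inv_mul_cancel h1βne h1βfin, mul_one]
    refine le_trans h5 (measure_mono ?_)
    intro γ hγ
    rw [Set.mem_iUnion₂] at hγ
    obtain ⟨q, hq, hγq⟩ := hγ
    rw [Set.mem_iUnion]
    exact ⟨q, Set.mem_iUnion.mpr ⟨(Finset.mem_Icc.mp hq).1, hγq⟩⟩
  -- the limsup set
  have htailmeas : ∀ M : ℕ, MeasurableSet (⋃ q : ℕ, ⋃ (_ : M ≤ q), A q) :=
    fun M => MeasurableSet.iUnion fun q => MeasurableSet.iUnion fun _ => hAmeas q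
  set E : Set (𝕋 × 𝕋) := ⋂ M : ℕ, ⋃ q : ℕ, ⋃ (_ : M ≤ q), A q with hE
  have hEmeas : MeasurableSet E := MeasurableSet.iInter fun M => htailmeas M
  have hEδ : δ ≤ volume E := by
    have hanti : Antitone (fun M : ℕ => ⋃ q : ℕ, ⋃ (_ : M ≤ q), A q) := by
      intro M M' h
      intro γ hγ
      rw [Set.mem_iUnion] at hγ ⊢
      obtain ⟨q, hq⟩ := hγ
      rw [Set.mem_iUnion] at hq
      obtain ⟨hMq, hγq⟩ := hq
      exact ⟨q, Set.mem_iUnion.mpr ⟨le_trans h hMq, hγq⟩⟩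
    rw [hE, Directed.measure_iInter (fun M => (htailmeas M).nullMeasurableSet)
      hanti.directed_ge ⟨0, measure_ne_top _ _⟩]
    exact le_iInf fun M => htail M
  -- invariance under rotation by -x
  set v : 𝕋 × 𝕋 := (((-x1 : ℝ) : 𝕋), ((-x2 : ℝ) : 𝕋)) with hv
  have hinv : E ⊆ (fun γ => v + γ) ⁻¹' E := by
    intro γ hγ
    rw [Set.mem_preimage, hE, Set.mem_iInter]
    rw [hE, Set.mem_iInter] at hγ
    intro M
    have hM1 := hγ (M+1)
    rw [Set.mem_iUnion] at hM1 ⊢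
    obtain ⟨q, hq⟩ := hM1
    rw [Set.mem_iUnion] at hq
    obtain ⟨hMq, hγA⟩ := hq
    refine ⟨q - 1, Set.mem_iUnion.mpr ⟨by omega, ?_⟩⟩
    rw [hA] at hγA ⊢
    obtain ⟨hγ1, hγ2⟩ := hγA
    rw [Set.mem_prod] at *
    rw [Metric.mem_closedBall] at hγ1 hγ2
    have hq1 : 1 ≤ q := by omega
    constructor
    · rw [Metric.mem_closedBall]
      have hcast : (((q - 1 : ℕ):ℝ)) * x1 = -x1 + (q:ℝ) * x1 := by
        rw [Nat.cast_sub hq1]; push_cast; ring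
      have hcoe : ((((q-1:ℕ):ℝ) * x1 : ℝ) : 𝕋)
          = ((-x1 : ℝ) : 𝕋) + (((q:ℝ) * x1 : ℝ) : 𝕋) := by
        rw [hcast, AddCircle.coe_add]
      have hfst : (v + γ).1 = ((-x1 : ℝ) : 𝕋) + γ.1 := rfl
      rw [hfst, hcoe, dist_add_left]
      exact le_trans hγ1 (hρanti (q-1) q (by omega))
    · rw [Metric.mem_closedBall]
      have hcast : (((q - 1 : ℕ):ℝ)) * x2 = -x2 + (q:ℝ) * x2 := by
        rw [Nat.cast_sub hq1]; push_cast; ring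
      have hcoe : ((((q-1:ℕ):ℝ) * x2 : ℝ) : 𝕋)
          = ((-x2 : ℝ) : 𝕋) + (((q:ℝ) * x2 : ℝ) : 𝕋) := by
        rw [hcast, AddCircle.coe_add]
      have hsnd : (v + γ).2 = ((-x2 : ℝ) : 𝕋) + γ.2 := rfl
      rw [hsnd, hcoe, dist_add_left]
      exact le_trans hγ2 (hτanti (q-1) q (by omega))
  -- ergodicity
  have hirr' : ∀ a b c' : ℤ, (a : ℝ) * (-x1) + (b : ℝ) * (-x2) + (c' : ℝ) = 0 →
      a = 0 ∧ b = 0 ∧ c' = 0 := by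
    intro a b c' h
    have hh := hirr (-a) (-b) c' (by push_cast; linarith)
    refine ⟨?_, ?_, hh.2.2⟩
    · omega
    · omega
  have hdr := kronecker_torus (-x1) (-x2) hirr'
  have herg : Ergodic (fun γ => v + γ) (volume : Measure (𝕋 × 𝕋)) := by
    rw [hv]
    exact ergodic_add_left_of_denseRange_zsmul hdr _
  rcases herg.ae_empty_or_univ_of_ae_le_preimage' hEmeas.nullMeasurableSet
      (HasSubset.Subset.eventuallyLE hinv) (measure_ne_top _ _) with h | h
  · exfalso
    have h0 : volume E = 0 := by
      rw [measure_congr h, measure_empty]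
    rw [h0] at hEδ
    exact absurd hEδ (not_le.mpr hδpos)
  · calc volume E = volume (Set.univ : Set (𝕋 × 𝕋)) := measure_congr h
      _ = 1 := measure_univ

theorem stmt11 (i j : ℝ) (hi : 0 < i) (hj : 0 < j) (hij : i + j = 1)
    (x : ℝ × ℝ) (hx : Badij i j x) (ψ : ℕ → ℝ) (hpos : ∀ r, 0 < ψ r)
    (hanti : Antitone ψ) (hdiv : ¬ Summable ψ) :
    volume (twistedW x i j ψ) = 1 := by
  classical
  obtain ⟨hirr, c, hc, hbad0⟩ := hx
  have hnint : ∀ y : ℝ, nint y = ‖(y : 𝕋)‖ := by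
    intro y
    rw [nint, UnitAddCircle.norm_eq]
  have hnintnn : ∀ y : ℝ, 0 ≤ nint y := fun y => abs_nonneg _
  -- bad transfer
  have hbad : ∀ m : ℕ, 1 ≤ m →
      (c/m)^i < ‖(((m:ℝ) * x.1 : ℝ) : 𝕋)‖ ∨ (c/m)^j < ‖(((m:ℝ) * x.2 : ℝ) : 𝕋)‖ := by
    intro m hm
    have h := hbad0 m (by omega)
    rw [gt_iff_lt, lt_max_iff] at h
    have hcm : 0 ≤ c / (m:ℝ) := div_nonneg hc.le (Nat.cast_nonneg m)
    rcases h with h | h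
    · left
      rw [pw, if_neg hi.ne'] at h
      have h2 := Real.rpow_lt_rpow hcm h hi
      have h3 : (nint ((m:ℝ) * x.1) ^ (1/i : ℝ)) ^ i = nint ((m:ℝ) * x.1) := by
        rw [← Real.rpow_mul (hnintnn _), one_div, inv_mul_cancel₀ hi.ne', Real.rpow_one]
      rw [h3] at h2
      rw [← hnint ((m:ℝ) * x.1)]
      exact h2
    · right
      rw [pw, if_neg hj.ne'] at h
      have h2 := Real.rpow_lt_rpow hcm h hj
      have h3 : (nint ((m:ℝ) * x.2) ^ (1/j : ℝ)) ^ j = nint ((m:ℝ) * x.2) := by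
        rw [← Real.rpow_mul (hnintnn _), one_div, inv_mul_cancel₀ hj.ne', Real.rpow_one]
      rw [h3] at h2
      rw [← hnint ((m:ℝ) * x.2)]
      exact h2
  -- the capped function
  set m₀ : ℝ := min ((2:ℝ)⁻¹ ^ (1/i : ℝ)) ((2:ℝ)⁻¹ ^ (1/j : ℝ)) with hm₀
  have hm₀pos : 0 < m₀ :=
    lt_min (Real.rpow_pos_of_pos (by norm_num) _) (Real.rpow_pos_of_pos (by norm_num) _)
  set φ : ℕ → ℝ := fun q => min (ψ q) m₀ with hφ
  have hφpos : ∀ q, 0 < φ q := fun q => lt_min (hpos q) hm₀pos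
  have hφanti : Antitone φ := fun a b h => min_le_min (hanti h) le_rfl
  have hφle : ∀ q, φ q ≤ ψ q := fun q => min_le_left _ _
  have hφdiv : ¬ Summable φ := by
    intro hs
    have h0 : Tendsto φ atTop (nhds 0) := hs.tendsto_atTop_zero
    have hev : ∀ᶠ q in atTop, φ q = ψ q := by
      filter_upwards [h0.eventually (gt_mem_nhds hm₀pos)] with q hq
      rcases le_or_gt (ψ q) m₀ with h | h
      · rw [hφ]; simp only; rw [min_eq_left h]
      · exfalso
        rw [hφ] at hq
        simp only at hq
        rw [min_eq_right h.le] at hq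
        exact lt_irrefl m₀ hq
    obtain ⟨N, hN⟩ := eventually_atTop.mp hev
    apply hdiv
    have h1 : Summable (fun q => φ (q + N)) := (summable_nat_add_iff N).mpr hs
    have h2 : (fun q => φ (q + N)) = (fun q => ψ (q + N)) :=
      funext fun q => hN _ (by omega)
    rw [h2] at h1
    exact (summable_nat_add_iff N).mp h1
  have hρ : ∀ q, φ q ^ i ≤ 1/2 := by
    intro q
    have h1 : φ q ≤ (2:ℝ)⁻¹ ^ (1/i : ℝ) := le_trans (min_le_right _ _) (min_le_left _ _)
    calc φ q ^ i ≤ ((2:ℝ)⁻¹ ^ (1/i : ℝ)) ^ i := Real.rpow_le_rpow (hφpos q).le h1 hi.le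
      _ = (2:ℝ)⁻¹ := by
          rw [← Real.rpow_mul (by norm_num : (0:ℝ) ≤ 2⁻¹), one_div,
            inv_mul_cancel₀ hi.ne', Real.rpow_one]
      _ ≤ 1/2 := by norm_num
  have hτ : ∀ q, φ q ^ j ≤ 1/2 := by
    intro q
    have h1 : φ q ≤ (2:ℝ)⁻¹ ^ (1/j : ℝ) := le_trans (min_le_right _ _) (min_le_right _ _)
    calc φ q ^ j ≤ ((2:ℝ)⁻¹ ^ (1/j : ℝ)) ^ j := Real.rpow_le_rpow (hφpos q).le h1 hj.le
      _ = (2:ℝ)⁻¹ := by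
          rw [← Real.rpow_mul (by norm_num : (0:ℝ) ≤ 2⁻¹), one_div,
            inv_mul_cancel₀ hj.ne', Real.rpow_one]
      _ ≤ 1/2 := by norm_num
  -- apply the torus theorem
  set Λ : ℝ := max ((4:ℝ) ^ (1/i : ℝ)) ((4:ℝ) ^ (1/j : ℝ)) with hΛ
  have htorus := torus_full i j c Λ hi hj hij hc (le_max_left _ _) (le_max_right _ _)
    x.1 x.2 hirr hbad φ hφpos hφanti hφdiv hρ hτ
  set E : Set (𝕋 × 𝕋) := ⋂ M : ℕ, ⋃ q : ℕ, ⋃ (_ : M ≤ q),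
      (Metric.closedBall ((((q:ℝ) * x.1 : ℝ)) : 𝕋) (φ q ^ i) ×ˢ
       Metric.closedBall ((((q:ℝ) * x.2 : ℝ)) : 𝕋) (φ q ^ j)) with hE
  have hEmeas : MeasurableSet E :=
    MeasurableSet.iInter fun M => MeasurableSet.iUnion fun q => MeasurableSet.iUnion fun _ =>
      measurableSet_closedBall.prod measurableSet_closedBall
  set Φ : ℝ × ℝ → 𝕋 × 𝕋 := fun γ => ((γ.1 : 𝕋), (γ.2 : 𝕋)) with hΦ
  have hΦcont : Continuous Φ :=
    ((AddCircle.continuous_mk' 1).comp continuous_fst).prodMk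
      ((AddCircle.continuous_mk' 1).comp continuous_snd)
  have hΦmeas : Measurable Φ := hΦcont.measurable
  -- the subset of the twisted set
  have hsub : (Set.Ioc (0:ℝ) 1 ×ˢ Set.Ioc (0:ℝ) 1) ∩ Φ ⁻¹' E ⊆ twistedW x i j ψ := by
    rintro γ ⟨hγR, hγE⟩
    rw [Set.mem_prod] at hγR
    constructor
    · rw [Set.mem_Icc]
      constructor
      · rw [Prod.le_def]
        exact ⟨hγR.1.1.le, hγR.2.1.le⟩
      · rw [Prod.le_def]
        exact ⟨hγR.1.2, hγR.2.2⟩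
    · -- infinitude
      rw [Set.mem_preimage, hE, Set.mem_iInter] at hγE
      set T0 : Set ℕ := {q : ℕ | Φ γ ∈
        (Metric.closedBall ((((q:ℝ) * x.1 : ℝ)) : 𝕋) (φ q ^ i) ×ˢ
         Metric.closedBall ((((q:ℝ) * x.2 : ℝ)) : 𝕋) (φ q ^ j))} with hT0
      have hT0inf : T0.Infinite := by
        apply Set.infinite_of_not_bddAbove
        rintro ⟨B, hB⟩
        have := hγE (B+1)
        rw [Set.mem_iUnion] at this
        obtain ⟨q, hq⟩ := this
        rw [Set.mem_iUnion] at hq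
        obtain ⟨hBq, hmem⟩ := hq
        have : q ≤ B := hB hmem
        omega
      have hkey : ∀ q : ℕ, q ∈ T0 → q ≠ 0 → ((q:ℤ) ≠ 0 ∧
          max (pw (nint (((q:ℤ):ℝ) * x.1 - γ.1)) i) (pw (nint (((q:ℤ):ℝ) * x.2 - γ.2)) j)
            ≤ ψ ((q:ℤ)).natAbs) := by
        intro q hq hq0
        rw [hT0, Set.mem_setOf_eq, Set.mem_prod] at hq
        obtain ⟨h1, h2⟩ := hq
        rw [Metric.mem_closedBall] at h1 h2
        have hcomp : ∀ (y γc e : ℝ), 0 < e →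
            dist (γc : 𝕋) ((((q:ℝ) * y : ℝ)) : 𝕋) ≤ φ q ^ e →
            pw (nint ((q:ℝ) * y - γc)) e ≤ φ q := by
          intro y γc e he hmem
          have hd : nint ((q:ℝ) * y - γc) ≤ φ q ^ e := by
            rw [hnint, AddCircle.coe_sub, ← dist_eq_norm, dist_comm]
            exact hmem
          rw [pw, if_neg he.ne']
          calc nint ((q:ℝ) * y - γc) ^ (1/e : ℝ)
              ≤ (φ q ^ e) ^ (1/e : ℝ) :=
                Real.rpow_le_rpow (hnintnn _) hd (by positivity)
            _ = φ q := by
                rw [← Real.rpow_mul (hφpos q).le, mul_one_div, div_self he.ne',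
                  Real.rpow_one]
        refine ⟨by exact_mod_cast hq0, ?_⟩
        have hcast : ((q:ℤ):ℝ) = (q:ℝ) := by push_cast; ring
        rw [hcast, Int.natAbs_natCast]
        apply max_le
        · exact le_trans (hcomp x.1 γ.1 i hi h1) (hφle q)
        · exact le_trans (hcomp x.2 γ.2 j hj h2) (hφle q)
      apply Set.Infinite.mono (s := (fun q : ℕ => (q:ℤ)) '' (T0 \ {0}))
      · rintro z ⟨q, ⟨hqT0, hq0⟩, rfl⟩
        exact hkey q hqT0 (by simpa using hq0)
      · exact Set.Infinite.image (fun a _ b _ h => by exact_mod_cast h)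
          (hT0inf.diff (Set.finite_singleton 0))
  -- measure computation
  have hmp : MeasurePreserving Φ
      (((volume : Measure ℝ).restrict (Set.Ioc 0 1)).prod
        ((volume : Measure ℝ).restrict (Set.Ioc 0 1))) (volume : Measure (𝕋 × 𝕋)) := by
    have h1 : MeasurePreserving ((↑) : ℝ → 𝕋)
        ((volume : Measure ℝ).restrict (Set.Ioc (0:ℝ) (0+1))) volume :=
      AddCircle.measurePreserving_mk 1 0
    rw [zero_add] at h1
    have h2 := h1.prod h1
    rw [← Measure.volume_eq_prod] at h2
    exact h2
  have hvol1 : volume ((Set.Ioc (0:ℝ) 1 ×ˢ Set.Ioc (0:ℝ) 1) ∩ Φ ⁻¹' E) = 1 := by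
    have hrestrict : (volume : Measure (ℝ × ℝ)).restrict (Set.Ioc (0:ℝ) 1 ×ˢ Set.Ioc (0:ℝ) 1)
        = ((volume : Measure ℝ).restrict (Set.Ioc 0 1)).prod
          ((volume : Measure ℝ).restrict (Set.Ioc 0 1)) := by
      rw [Measure.volume_eq_prod, Measure.prod_restrict]
    have h1 : volume ((Set.Ioc (0:ℝ) 1 ×ˢ Set.Ioc (0:ℝ) 1) ∩ Φ ⁻¹' E)
        = ((volume : Measure (ℝ × ℝ)).restrict (Set.Ioc (0:ℝ) 1 ×ˢ Set.Ioc (0:ℝ) 1))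
          (Φ ⁻¹' E) := by
      rw [Measure.restrict_apply (hΦmeas hEmeas), Set.inter_comm]
    rw [h1, hrestrict, hmp.measure_preimage hEmeas.nullMeasurableSet]
    exact htorus
  have hIccvol : volume (Set.Icc (0:ℝ×ℝ) 1) = 1 := by
    have : Set.Icc (0:ℝ×ℝ) 1 = Set.Icc (0:ℝ) 1 ×ˢ Set.Icc (0:ℝ) 1 := by
      rw [Set.Icc_prod_eq]
      rfl
    rw [this, Measure.volume_eq_prod, Measure.prod_prod, Real.volume_Icc]
    norm_num
  apply le_antisymm
  · calc volume (twistedW x i j ψ) ≤ volume (Set.Icc (0:ℝ×ℝ) 1) :=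
        measure_mono (Set.sep_subset _ _)
      _ = 1 := hIccvol
  · calc (1:ℝ≥0∞) = volume ((Set.Ioc (0:ℝ) 1 ×ˢ Set.Ioc (0:ℝ) 1) ∩ Φ ⁻¹' E) := hvol1.symm
      _ ≤ volume (twistedW x i j ψ) := measure_mono hsub
end
end
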